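/- arXiv:1812.02199 — 6 statements merged into one kernel-verified Lean document; each statement's English description precedes it below -/
import Mathlib

section
/- Let G be a non-abelian finitely generated group. Suppose that either G has no elements of order 4, or G has no non-trivial abelian characteristic subgroups. Then for every finite symmetric generating set S of G with 1 ∉ S, there exist two symmetric generating sets S̃ ⊆ T of G with 1 ∉ T, such that |S̃| = |S|, |T| ≤ 3|S|, and the triple (G, S̃, T) is strongly orientation-rigid. -/
open scoped Pointwise

universe u v

/-- The (right) Cayley graph of `G` with respect to `S`: vertices are the elements
of `G`, and `g`, `h` are adjacent iff `g⁻¹ * h ∈ S ∪ S⁻¹`. -/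
def cayleyGraph (G : Type u) [Group G] (S : Set G) : SimpleGraph G where
  Adj g h := g ≠ h ∧ g⁻¹ * h ∈ S ∪ S⁻¹
  symm := ⟨by
    rintro g h ⟨hne, hmem⟩
    refine ⟨hne.symm, ?_⟩
    have h1 : h⁻¹ * g = (g⁻¹ * h)⁻¹ := by group
    rw [h1]
    rcases hmem with hm | hm
    · exact Or.inr (Set.mem_inv.mpr (by simpa using hm))
    · exact Or.inl (Set.mem_inv.mp hm)⟩
  loopless := ⟨fun g hg => hg.1 rfl⟩

/-- A group is generalized dicyclic if it is non-abelian and has an abelian normal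
subgroup `A` of index 2 and an element `x` of order 4 not in `A` such that
`x * a * x⁻¹ = a⁻¹` for every `a ∈ A`. -/
def IsGeneralizedDicyclic (G : Type u) [Group G] : Prop :=
  (¬ ∀ a b : G, a * b = b * a) ∧
    ∃ (A : Subgroup G) (x : G), A.Normal ∧ (∀ a ∈ A, ∀ b ∈ A, a * b = b * a) ∧
      A.index = 2 ∧ orderOf x = 4 ∧ x ∉ A ∧ ∀ a ∈ A, x * a * x⁻¹ = a⁻¹

/-- A group is generalized dihedral if it is a semidirect product `A ⋊ Z/2Z` with `A`
abelian and `Z/2Z` acting by inversion; equivalently it has an abelian subgroup `A` of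
index 2 and an element `x ∉ A` with `x ^ 2 = 1` acting on `A` by inversion. -/
def IsGeneralizedDihedral (G : Type u) [Group G] : Prop :=
  ∃ A : Subgroup G, (∀ a ∈ A, ∀ b ∈ A, a * b = b * a) ∧ A.index = 2 ∧
    ∃ x : G, x ∉ A ∧ x ^ 2 = 1 ∧ ∀ a ∈ A, x * a * x⁻¹ = a⁻¹

section GroupDefs

variable {G : Type u} [Group G]

/-- The vertex set of the ball of radius 1 around `1` in the Cayley graph `Cay(G,S)`. -/
def ball1 (S : Set G) : Set G := insert (1 : G) (S ∪ S⁻¹)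

/-- A map `φ : G → G` is colour-preserving (for the colouring of `Cay(G,S)` by
unoriented labels) if `φ (g * s) ∈ {φ g * s, φ g * s⁻¹}` for all `g ∈ G`, `s ∈ S^±`. -/
def IsColourPreserving (S : Set G) (φ : G → G) : Prop :=
  ∀ g : G, ∀ s ∈ S ∪ S⁻¹, φ (g * s) = φ g * s ∨ φ (g * s) = φ g * s⁻¹

/-- A permutation of the vertices of a graph is an automorphism if it preserves
adjacency. -/
def IsGraphAuto {V : Type v} (Γ : SimpleGraph V) (φ : Equiv.Perm V) : Prop :=
  ∀ x y : V, Γ.Adj (φ x) (φ y) ↔ Γ.Adj x y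

/-- `Cay(G,S)` is a graphical regular representation: its only automorphisms are the
left multiplications by elements of `G`. -/
def IsGRR (S : Set G) : Prop :=
  ∀ φ : Equiv.Perm G, IsGraphAuto (cayleyGraph G S) φ → ∃ a : G, ∀ x : G, φ x = a * x

/-- The directed Cayley graph `Cay⃗(G,S)` is a digraphical regular representation: its
only automorphisms are the left multiplications by elements of `G`. -/
def IsDRR (S : Set G) : Prop :=
  ∀ φ : Equiv.Perm G, (∀ g h : G, (φ g)⁻¹ * φ h ∈ S ↔ g⁻¹ * h ∈ S) →
    ∃ a : G, ∀ x : G, φ x = a * x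

/-- The pair `(G,S)` is orientation-rigid if the group of colour-preserving
automorphisms of `Cay(G,S)` acts freely and transitively on the vertices. -/
def OrientationRigidPair (S : Set G) : Prop :=
  ∀ x y : G, ∃! φ : Equiv.Perm G, IsColourPreserving S ⇑φ ∧ φ x = y

/-- The pair `(G,S)` is colour-rigid if every automorphism of `Cay(G,S)` is
colour-preserving. -/
def ColourRigidPair (S : Set G) : Prop :=
  ∀ φ : Equiv.Perm G, IsGraphAuto (cayleyGraph G S) φ → IsColourPreserving S ⇑φ

/-- A colour-preserving automorphism of the ball of radius 1 around `1` in `Cay(G,T)`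
fixing the vertex `1`. -/
def BallColourAutoFixing (T : Set G) (φ : G → G) : Prop :=
  Set.BijOn φ (ball1 T) (ball1 T) ∧ φ 1 = 1 ∧
    ∀ g ∈ ball1 T, ∀ s ∈ T ∪ T⁻¹, g * s ∈ ball1 T →
      (φ (g * s) = φ g * s ∨ φ (g * s) = φ g * s⁻¹)

/-- An automorphism of the ball of radius 1 around `1` in `Cay(G,T)` (as induced
subgraph) fixing the vertex `1`. -/
def BallAutoFixing (T : Set G) (φ : G → G) : Prop :=
  Set.BijOn φ (ball1 T) (ball1 T) ∧ φ 1 = 1 ∧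
    ∀ g ∈ ball1 T, ∀ h ∈ ball1 T,
      ((cayleyGraph G T).Adj (φ g) (φ h) ↔ (cayleyGraph G T).Adj g h)

/-- `(G,S,T)` is a strongly orientation-rigid triple: every colour-preserving
automorphism of the ball of radius 1 of `Cay(G,T)` fixing `1` fixes the ball of
radius 1 of `Cay(G,S)` pointwise. -/
def StronglyOrientationRigid (S T : Set G) : Prop :=
  ∀ φ : G → G, BallColourAutoFixing T φ → ∀ x ∈ ball1 S, φ x = x

/-- `(G,S,T)` is a strongly colour-rigid triple: every automorphism of the ball of
radius 1 of `Cay(G,T)` fixing `1` acts by colour-preserving automorphisms on the ball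
of radius 1 of `Cay(G,S)`. -/
def StronglyColourRigid (S T : Set G) : Prop :=
  ∀ φ : G → G, BallAutoFixing T φ →
    ∀ g ∈ ball1 S, ∀ s ∈ S ∪ S⁻¹, g * s ∈ ball1 S →
      (φ (g * s) = φ g * s ∨ φ (g * s) = φ g * s⁻¹)

/-- `(G,S,T)` is a strong GRR triple: every automorphism of the ball of radius 1 of
`Cay(G,T)` fixing `1` fixes the ball of radius 1 of `Cay(G,S)` pointwise. -/
def StrongGRRTriple (S T : Set G) : Prop :=
  ∀ φ : G → G, BallAutoFixing T φ → ∀ x ∈ ball1 S, φ x = x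

/-- The number of triangles of `Cay(G,S)` containing the two vertices `1` and `s`. -/
noncomputable def triangleCount (S : Set G) (s : G) : ℕ :=
  Set.ncard {t : G | (cayleyGraph G S).Adj 1 s ∧ (cayleyGraph G S).Adj 1 t ∧
    (cayleyGraph G S).Adj t s}

/-- `S^{≤3}`: the set of non-identity elements of `G` which are products of at most 3
elements of `S^± = S ∪ S⁻¹`. -/
def wordLE3 (S : Set G) : Set G :=
  {g : G | g ≠ 1 ∧ ∃ l : List G, l.length ≤ 3 ∧ (∀ x ∈ l, x ∈ S ∪ S⁻¹) ∧ l.prod = g}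

/-- The group `𝓑(G,T)` of permutations `φ` of `T ∪ {1}` with `φ 1 = 1` and
`φ (s * t) ∈ {φ s * t, φ s * t⁻¹}` whenever `s ∈ T ∪ {1}`, `t ∈ T` and `s * t ∈ T`. -/
def MemBallPermGroup (T : Set G) (φ : G → G) : Prop :=
  Set.BijOn φ (insert (1 : G) T) (insert (1 : G) T) ∧ φ 1 = 1 ∧
    ∀ s ∈ insert (1 : G) T, ∀ t ∈ T, s * t ∈ T →
      (φ (s * t) = φ s * t ∨ φ (s * t) = φ s * t⁻¹)

end GroupDefs

/-- A covering of graphs: for every vertex `x`, the restriction of `f` to the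
neighbours of `x` is a bijection onto the neighbours of `f x`. -/
def IsGraphCovering {V : Type u} {W : Type v} (Γ : SimpleGraph V) (Δ : SimpleGraph W)
    (f : V → W) : Prop :=
  ∀ x : V, Set.BijOn f (Γ.neighborSet x) (Δ.neighborSet (f x))

/-- The restriction of `f` to the ball of radius 1 around `x` is an isomorphism onto
the ball of radius 1 around `f x`. -/
def BallIsoAt {V : Type u} {W : Type v} (Γ : SimpleGraph V) (Δ : SimpleGraph W)
    (f : V → W) (x : V) : Prop :=
  Set.BijOn f (insert x (Γ.neighborSet x)) (insert (f x) (Δ.neighborSet (f x))) ∧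
    ∀ y ∈ insert x (Γ.neighborSet x), ∀ z ∈ insert x (Γ.neighborSet x),
      (Γ.Adj y z ↔ Δ.Adj (f y) (f z))

/-- `ψ` is compatible with the labels of `Cay(G,S)`: two edges of `Cay(G,S)` with the
same image have the same (unoriented) label. -/
def CompatibleWithLabels {G : Type u} [Group G] {W : Type v} (S : Set G) (ψ : G → W) :
    Prop :=
  ∀ g h g' h' : G, (cayleyGraph G S).Adj g h → (cayleyGraph G S).Adj g' h' →
    ψ g = ψ g' → ψ h = ψ h' → (g⁻¹ * h = g'⁻¹ * h' ∨ g⁻¹ * h = h'⁻¹ * g')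

/-- The function `F(n) = 2(2n²+3n−2)²(2n²+4n−1)`. -/
def Ffun (n : ℕ) : ℕ := 2 * (2 * n ^ 2 + 3 * n - 2) ^ 2 * (2 * n ^ 2 + 4 * n - 1)

/-- The function `F̌(n) = 4(2n²+3n−2)²·n·(n+2)`. -/
def Fcheckfun (n : ℕ) : ℕ := 4 * (2 * n ^ 2 + 3 * n - 2) ^ 2 * n * (n + 2)

/-- A Tarski monster of exponent `p`: an infinite group all of whose non-trivial proper
subgroups are cyclic of order `p`. -/
def IsTarskiMonster (G : Type u) [Group G] (p : ℕ) : Prop :=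
  Infinite G ∧ ∀ H : Subgroup G, H ≠ ⊥ → H ≠ ⊤ → IsCyclic H ∧ Nat.card H = p


section Aux

variable {G : Type u} [Group G]

private lemma mem_TT_left {T : Set G} {x : G} (hx : x ∈ T) : x ∈ T ∪ T⁻¹ := Or.inl hx

private lemma mem_TT_inv {T : Set G} {x : G} (hx : x ∈ T) : x⁻¹ ∈ T ∪ T⁻¹ :=
  Or.inr (by simpa using hx)

private lemma mem_ball {T : Set G} {x : G} (hx : x ∈ T ∪ T⁻¹) : x ∈ ball1 T :=
  Set.mem_insert_of_mem _ hx

private lemma phi_pm {T : Set G} {φ : G → G} (h : BallColourAutoFixing T φ) {x : G}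
    (hx : x ∈ T ∪ T⁻¹) : φ x = x ∨ φ x = x⁻¹ := by
  obtain ⟨-, h1, hc⟩ := h
  have := hc 1 (Set.mem_insert _ _) x hx (by rw [one_mul]; exact mem_ball hx)
  rwa [one_mul, h1, one_mul, one_mul] at this

private lemma gadgetN {T : Set G} {φ : G → G} (h : BallColourAutoFixing T φ) {s t : G}
    (hsT : s ∈ T) (htT : t ∈ T) (hstT : s * t ∈ T) (hs2 : s * s ≠ 1)
    (hcomm : s * t ≠ t * s) (hA : s * t * s⁻¹ ≠ t⁻¹) (hB : s * s ≠ (t * t)⁻¹) :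
    φ s = s ∧ φ s⁻¹ = s⁻¹ := by
  have hφs := phi_pm h (mem_TT_left hsT)
  have hφt := phi_pm h (mem_TT_left htT)
  have hφst := phi_pm h (mem_TT_left hstT)
  have hφsi := phi_pm h (mem_TT_inv hsT)
  obtain ⟨-, h1, hc⟩ := h
  have c1 := hc s (mem_ball (mem_TT_left hsT)) t (mem_TT_left htT)
    (mem_ball (mem_TT_left hstT))
  have c2 := hc s⁻¹ (mem_ball (mem_TT_inv hsT)) (s * t) (mem_TT_left hstT)
    (by rw [inv_mul_cancel_left]; exact mem_ball (mem_TT_left htT))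
  rw [inv_mul_cancel_left] at c2
  have hfs : φ s = s := by
    rcases hφs with h' | h'
    · exact h'
    exfalso
    rw [h'] at c1
    rcases hφst with h'' | h'' <;> rw [h''] at c1 <;> rcases c1 with e | e
    · exact hs2 (by
        calc s*s = s*(s*t)*t⁻¹ := by group
          _ = s*(s⁻¹*t)*t⁻¹ := by rw [e]
          _ = 1 := by group)
    · exact hB (by
        calc s*s = s*(s*t)*t⁻¹ := by group
          _ = s*(s⁻¹*t⁻¹)*t⁻¹ := by rw [e]
          _ = (t*t)⁻¹ := by group)
    · exact hA (by
        calc s*t*s⁻¹ = ((s*t)⁻¹)⁻¹*s⁻¹ := by group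
          _ = (s⁻¹*t)⁻¹*s⁻¹ := by rw [e]
          _ = t⁻¹ := by group)
    · exact hcomm (by
        calc s*t = ((s*t)⁻¹)⁻¹ := by group
          _ = (s⁻¹*t⁻¹)⁻¹ := by rw [e]
          _ = t*s := by group)
  refine ⟨hfs, ?_⟩
  rcases hφsi with h' | h'
  · exact h'
  exfalso
  rw [inv_inv] at h'
  rw [h'] at c2
  rcases hφt with h'' | h'' <;> rw [h''] at c2 <;> rcases c2 with e | e
  · exact hs2 (by
      calc s*s = s*(s*t)*t⁻¹ := by group
        _ = t*t⁻¹ := by rw [← e]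
        _ = 1 := by group)
  · exact hA (by
      calc s*t*s⁻¹ = (s*(s*t)⁻¹)⁻¹ := by group
        _ = t⁻¹ := by rw [← e])
  · exact hB (by
      calc s*s = s*(s*t)*t⁻¹ := by group
        _ = t⁻¹*t⁻¹ := by rw [← e]
        _ = (t*t)⁻¹ := by group)
  · exact hcomm (by
      calc s*t = (s*(s*t)⁻¹)⁻¹*s := by group
        _ = (t⁻¹)⁻¹*s := by rw [← e]
        _ = t*s := by group)

private lemma gadgetC {T : Set G} {φ : G → G} (h : BallColourAutoFixing T φ) {s t : G}
    (hsT : s ∈ T) (htT : t ∈ T) (hstT : s * t ∈ T) (hcen : ∀ g : G, s * g = g * s)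
    (hs2 : s * s ≠ 1) (ht2 : t * t ≠ 1) (hB : s * s ≠ (t * t)⁻¹) (hφt : φ t = t) :
    φ s = s ∧ φ s⁻¹ = s⁻¹ := by
  have hcen' : ∀ g : G, g * s⁻¹ = s⁻¹ * g := by
    intro g
    calc g*s⁻¹ = s⁻¹*(s*g)*s⁻¹ := by group
      _ = s⁻¹*(g*s)*s⁻¹ := by rw [hcen g]
      _ = s⁻¹*g := by group
  have hφs := phi_pm h (mem_TT_left hsT)
  have hφst := phi_pm h (mem_TT_left hstT)
  have hφsi := phi_pm h (mem_TT_inv hsT)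
  obtain ⟨-, h1, hc⟩ := h
  have c1 := hc s (mem_ball (mem_TT_left hsT)) t (mem_TT_left htT)
    (mem_ball (mem_TT_left hstT))
  have c2 := hc t (mem_ball (mem_TT_left htT)) s (mem_TT_left hsT)
    (by rw [← hcen t]; exact mem_ball (mem_TT_left hstT))
  rw [← hcen t, hφt] at c2
  have c3 := hc s⁻¹ (mem_ball (mem_TT_inv hsT)) (s * t) (mem_TT_left hstT)
    (by rw [inv_mul_cancel_left]; exact mem_ball (mem_TT_left htT))
  rw [inv_mul_cancel_left, hφt] at c3
  have hfs : φ s = s := by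
    rcases hφs with h' | h'
    · exact h'
    exfalso
    rw [h'] at c1
    rcases c1 with e1 | e1 <;> rcases c2 with e2 | e2
    · -- φ(st) = s⁻¹*t and = t*s
      have e : s⁻¹*t = s*t := by rw [e1.symm.trans e2, ← hcen t]
      exact hs2 (by
        calc s*s = s*(s*t)*t⁻¹ := by group
          _ = s*(s⁻¹*t)*t⁻¹ := by rw [← e]
          _ = 1 := by group)
    · -- φ(st) = s⁻¹*t and = t*s⁻¹
      have e : s⁻¹*t = s⁻¹*t⁻¹ → False := by
        intro e'
        exact ht2 (by
          calc t*t = t*(s*(s⁻¹*t)) := by group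
            _ = t*(s*(s⁻¹*t⁻¹)) := by rw [e']
            _ = 1 := by group)
      rcases hφst with e0 | e0
      · have e' : s*t = s⁻¹*t := e0.symm.trans e1
        exact hs2 (by
          calc s*s = s*(s*t)*t⁻¹ := by group
            _ = s*(s⁻¹*t)*t⁻¹ := by rw [e']
            _ = 1 := by group)
      · have e' : s⁻¹*t = (s*t)⁻¹ := e1.symm.trans e0
        rw [show (s*t)⁻¹ = t⁻¹*s⁻¹ by group, hcen' t⁻¹] at e'
        exact e e'
    · -- φ(st) = s⁻¹*t⁻¹ and = t*s
      have e : s⁻¹*t⁻¹ = s*t := by rw [e1.symm.trans e2, ← hcen t]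
      exact hB (by
        calc s*s = s*(s*t)*t⁻¹ := by group
          _ = s*(s⁻¹*t⁻¹)*t⁻¹ := by rw [← e]
          _ = (t*t)⁻¹ := by group)
    · -- φ(st) = s⁻¹*t⁻¹ and = t*s⁻¹
      have e : s⁻¹*t⁻¹ = s⁻¹*t := by rw [e1.symm.trans e2, hcen' t]
      exact ht2 (by
        calc t*t = t*(s*(s⁻¹*t)) := by group
          _ = t*(s*(s⁻¹*t⁻¹)) := by rw [← e]
          _ = 1 := by group)
  refine ⟨hfs, ?_⟩
  rcases hφsi with h' | h'
  · exact h'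
  exfalso
  rw [inv_inv] at h'
  rw [h'] at c3
  rcases c3 with e | e
  · exact hs2 (by
      calc s*s = s*(s*t)*t⁻¹ := by group
        _ = t*t⁻¹ := by rw [← e]
        _ = 1 := by group)
  · have e2 : s*(s*t)⁻¹ = t⁻¹ := by
      calc s*(s*t)⁻¹ = s*t⁻¹*s⁻¹ := by group
        _ = t⁻¹*s*s⁻¹ := by rw [hcen t⁻¹]
        _ = t⁻¹ := by group
    have e3 : t = t⁻¹ := e.trans e2
    exact ht2 (by nth_rewrite 1 [e3]; group)

end Aux

section Aux2

variable {G : Type u} [Group G]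

private lemma hyp_contra
    (hyp : (∀ g : G, orderOf g ≠ 4) ∨
      (∀ H : Subgroup G, H.Characteristic → (∀ a ∈ H, ∀ b ∈ H, a * b = b * a) → H = ⊥))
    {z x : G} (hzc : ∀ g : G, z * g = g * z) (hz1 : z ≠ 1)
    (hx2 : x * x ≠ 1) (hx4 : (x * x) * (x * x) = 1) : False := by
  rcases hyp with h4 | hch
  · apply h4 x
    have hx4' : x ^ 4 = 1 := by
      rw [show (4:ℕ) = 2+2 from rfl, pow_add, pow_two]
      exact hx4
    have hdvd : orderOf x ∣ 4 := orderOf_dvd_of_pow_eq_one hx4'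
    have hne1 : orderOf x ≠ 1 := by
      intro h; exact hx2 (by rw [orderOf_eq_one_iff.mp h, one_mul])
    have hne2 : orderOf x ≠ 2 := by
      intro h
      have h2 := pow_orderOf_eq_one x
      rw [h] at h2
      exact hx2 (by rw [← pow_two]; exact h2)
    have hdvd' : orderOf x ∣ 2 ^ 2 := by norm_num; exact hdvd
    obtain ⟨i, hi, he⟩ := (Nat.dvd_prime_pow Nat.prime_two).mp hdvd'

    interval_cases i
    · norm_num at he; exact (hx2 (by rw [he, one_mul])).elim
    · norm_num at he; exact (hne2 he).elim
    · norm_num at he; exact he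
  · have hZ : Subgroup.center G = ⊥ := by
      apply hch _ (by infer_instance)
      intro a _ b hb
      exact Subgroup.mem_center_iff.mp hb a
    have hzmem : z ∈ Subgroup.center G :=
      Subgroup.mem_center_iff.mpr (fun g => (hzc g).symm)
    rw [hZ] at hzmem
    exact hz1 (Subgroup.mem_bot.mp hzmem)

private lemma exists_witness
    (hyp : (∀ g : G, orderOf g ≠ 4) ∨
      (∀ H : Subgroup G, H.Characteristic → (∀ a ∈ H, ∀ b ∈ H, a * b = b * a) → H = ⊥))
    {s : G} (hs2 : s * s ≠ 1) (hsnc : ∃ w, s * w ≠ w * s) :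
    ∃ t, s * t ≠ t * s ∧ s * t * s⁻¹ ≠ t⁻¹ ∧ s * s ≠ (t * t)⁻¹ := by
  by_contra hcon
  have H : ∀ t, s * t ≠ t * s → s * t * s⁻¹ = t⁻¹ ∨ s * s = (t * t)⁻¹ := by
    intro t ht
    by_cases hA : s * t * s⁻¹ = t⁻¹
    · exact Or.inl hA
    · right
      by_contra hB
      exact hcon ⟨t, ht, hA, hB⟩
  have hZ : ∀ g, (s*s)*g = g*(s*s) := by
    intro g
    by_cases hg : s*g = g*s
    · calc (s*s)*g = s*(s*g) := by group
        _ = s*(g*s) := by rw [hg]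
        _ = (s*g)*s := by group
        _ = (g*s)*s := by rw [hg]
        _ = g*(s*s) := by group
    · rcases H g hg with hA | hB
      · have d1 : s*g = g⁻¹*s := by
          calc s*g = (s*g*s⁻¹)*s := by group
            _ = g⁻¹*s := by rw [hA]
        have d2 : s*g⁻¹ = g*s := by
          calc s*g⁻¹ = (s*g*s⁻¹)⁻¹*s := by group
            _ = (g⁻¹)⁻¹*s := by rw [hA]
            _ = g*s := by group
        calc (s*s)*g = s*(s*g) := by group
          _ = s*(g⁻¹*s) := by rw [d1]
          _ = (s*g⁻¹)*s := by group
          _ = (g*s)*s := by rw [d2]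
          _ = g*(s*s) := by group
      · calc (s*s)*g = (g*g)⁻¹*g := by rw [hB]
          _ = g*(g*g)⁻¹ := by group
          _ = g*(s*s) := by rw [hB]
  have hPst : ∀ t, s*t ≠ t*s → s*(s*t) ≠ (s*t)*s := by
    intro t ht hE
    apply ht
    calc s*t = s⁻¹*(s*(s*t)) := by group
      _ = s⁻¹*((s*t)*s) := by rw [hE]
      _ = t*s := by group
  have key : ∀ t, s*t ≠ t*s → s*t*s⁻¹ = t⁻¹ → (s*s)*(s*s) = 1 := by
    intro t ht hA
    by_cases hB : s*s = (t*t)⁻¹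
    · have e1 : s*(t*t)*s⁻¹ = t⁻¹*t⁻¹ := by
        calc s*(t*t)*s⁻¹ = (s*t*s⁻¹)*(s*t*s⁻¹) := by group
          _ = t⁻¹*t⁻¹ := by rw [hA]
      have e2 : t*t = (s*s)⁻¹ := by rw [hB, inv_inv]
      rw [e2] at e1
      have e3 : (s*s)⁻¹ = t⁻¹*t⁻¹ := by
        calc (s*s)⁻¹ = s*(s*s)⁻¹*s⁻¹ := by group
          _ = t⁻¹*t⁻¹ := e1
      have e4 : (s*s)⁻¹ = s*s := by
        rw [e3, show t⁻¹*t⁻¹ = (t*t)⁻¹ by group, ← hB]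
      calc (s*s)*(s*s) = (s*s)*(s*s)⁻¹ := by rw [e4]
        _ = 1 := by group
    · have hAst : ¬ s*(s*t)*s⁻¹ = (s*t)⁻¹ := by
        intro hE
        apply hB
        calc s*s = (s*(s*t)*s⁻¹)*(s*t⁻¹) := by group
          _ = (s*t)⁻¹*(s*t⁻¹) := by rw [hE]
          _ = (t*t)⁻¹ := by group
      have hBst := (H (s*t) (hPst t ht)).resolve_left hAst
      have d2 : s*t⁻¹ = t*s := by
        calc s*t⁻¹ = (s*t*s⁻¹)⁻¹*s := by group
          _ = (t⁻¹)⁻¹*s := by rw [hA]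
          _ = t*s := by group
      have K : (s*t)*(s*t) = s*s := by
        calc (s*t)*(s*t) = s*(t*s)*t := by group
          _ = s*(s*t⁻¹)*t := by rw [← d2]
          _ = s*s := by group
      rw [K] at hBst
      calc (s*s)*(s*s) = (s*s)*(s*s)⁻¹ := by rw [← hBst]
        _ = 1 := by group
  obtain ⟨t₀, ht₀⟩ := hsnc
  have hfin : (s*s)*(s*s) = 1 := by
    rcases H t₀ ht₀ with hA | hB
    · exact key t₀ ht₀ hA
    · have hA' : s*(s*t₀)*s⁻¹ = (s*t₀)⁻¹ := by
        calc s*(s*t₀)*s⁻¹ = ((s*s)*t₀)*s⁻¹ := by group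
          _ = ((t₀*t₀)⁻¹*t₀)*s⁻¹ := by rw [hB]
          _ = (s*t₀)⁻¹ := by group
      exact key (s*t₀) (hPst t₀ ht₀) hA'
  exact hyp_contra hyp hZ hs2 hs2 hfin

end Aux2

section Aux3

variable {G : Type u} [Group G]

private lemma exists_noncentral_sq {a b : G} (hab : a * b ≠ b * a) :
    ∃ t : G, (∃ w, t * w ≠ w * t) ∧ t * t ≠ 1 := by
  by_cases ha : a * a = 1
  · by_cases hb : b * b = 1
    · refine ⟨a * b, ⟨a, fun hE => hab ?_⟩, fun hE => hab ?_⟩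
      · calc a*b = a⁻¹*(a*(a*b)) := by group
          _ = a⁻¹*((a*b)*a) := by rw [hE]
          _ = b*a := by group
      · have hai : a⁻¹ = a := inv_eq_of_mul_eq_one_right ha
        have hbi : b⁻¹ = b := inv_eq_of_mul_eq_one_right hb
        have hti : (a*b)⁻¹ = a*b := inv_eq_of_mul_eq_one_right hE
        calc a*b = (a*b)⁻¹ := hti.symm
          _ = b⁻¹*a⁻¹ := by group
          _ = b*a := by rw [hai, hbi]
    · exact ⟨b, ⟨a, fun hE => hab hE.symm⟩, hb⟩
  · exact ⟨a, ⟨b, hab⟩, ha⟩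

end Aux3

section Aux4

variable {G : Type u} [Group G]

private lemma exists_noncomm_mem {S : Finset G}
    (hSgen : Subgroup.closure (S : Set G) = ⊤)
    (hab : ¬ ∀ a b : G, a * b = b * a) :
    ∃ a ∈ S, ∃ b ∈ S, a * b ≠ b * a := by
  by_contra hcon
  push_neg at hcon
  apply hab
  have h1 : Subgroup.closure (S : Set G) ≤ Subgroup.centralizer (S : Set G) := by
    rw [Subgroup.closure_le]
    intro a ha
    exact Subgroup.mem_centralizer_iff.mpr (fun h hh => (hcon a ha h hh).symm)
  have h2 : ∀ b ∈ S, b ∈ Subgroup.center G := by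
    intro b hb
    rw [Subgroup.mem_center_iff]
    intro g
    have hg : g ∈ Subgroup.centralizer (S : Set G) := h1 (by rw [hSgen]; trivial)
    exact (Subgroup.mem_centralizer_iff.mp hg b hb).symm
  have h3 : Subgroup.center G = ⊤ := by
    rw [eq_top_iff, ← hSgen, Subgroup.closure_le]
    intro b hb; exact h2 b hb
  intro a b
  have : b ∈ Subgroup.center G := by rw [h3]; trivial
  exact Subgroup.mem_center_iff.mp this a

private lemma inv_central {s : G} (h : ∀ g : G, s * g = g * s) : ∀ g : G, s⁻¹ * g = g * s⁻¹ := by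
  intro g
  calc s⁻¹*g = s⁻¹*(g*s)*s⁻¹ := by group
    _ = s⁻¹*(s*g)*s⁻¹ := by rw [← h g]
    _ = g*s⁻¹ := by group

private lemma exists_pairing :
    ∀ (n : ℕ) (S : Finset G), S.card ≤ n → (∀ x ∈ S, x⁻¹ ∈ S) →
    ∃ R : Finset G, R ⊆ S ∧ (∀ x ∈ R, x * x ≠ 1) ∧ (∀ x ∈ R, x⁻¹ ∉ R) ∧
      (∀ x ∈ S, x * x ≠ 1 → x ∈ R ∨ x⁻¹ ∈ R) := by
  classical
  intro n
  induction n with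
  | zero =>
    intro S hcard _
    refine ⟨∅, by simp, by simp, by simp, ?_⟩
    rw [Nat.le_zero, Finset.card_eq_zero] at hcard
    simp [hcard]
  | succ n ih =>
    intro S hcard hinv
    by_cases hex : ∃ x ∈ S, x * x ≠ 1
    · obtain ⟨x, hxS, hx2⟩ := hex
      set S' := (S.erase x).erase x⁻¹ with hS'
      have hS'sub : S' ⊆ S := fun y hy =>
        Finset.mem_of_mem_erase (Finset.mem_of_mem_erase hy)
      have hS'card : S'.card ≤ n := by
        have h1 : (S.erase x).card = S.card - 1 := Finset.card_erase_of_mem hxS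
        have h2 : S'.card ≤ (S.erase x).card := Finset.card_erase_le
        have h3 : 1 ≤ S.card := Finset.card_pos.mpr ⟨x, hxS⟩
        omega
      have hS'inv : ∀ y ∈ S', y⁻¹ ∈ S' := by
        intro y hy
        rw [hS', Finset.mem_erase, Finset.mem_erase] at hy ⊢
        refine ⟨fun h => hy.2.1 (inv_injective h), fun h => hy.1 (by rw [← h, inv_inv]),
          hinv y hy.2.2⟩
      obtain ⟨R', hR'sub, hR'sq, hR'inv, hR'cov⟩ := ih S' hS'card hS'inv
      have hxinvS' : x⁻¹ ∉ S' := by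
        rw [hS']
        exact Finset.notMem_erase _ _
      have hxS' : x ∉ S' := by
        intro h
        rw [hS', Finset.mem_erase, Finset.mem_erase] at h
        exact h.2.1 rfl
      refine ⟨insert x R', ?_, ?_, ?_, ?_⟩
      · intro y hy
        rcases Finset.mem_insert.mp hy with h | h
        · rw [h]; exact hxS
        · exact hS'sub (hR'sub h)
      · intro y hy
        rcases Finset.mem_insert.mp hy with h | h
        · rw [h]; exact hx2
        · exact hR'sq y h
      · intro y hy hyi
        rcases Finset.mem_insert.mp hy with h | h
        · rcases Finset.mem_insert.mp hyi with h' | h'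
          · rw [h] at h'
            refine hx2 ?_
            calc x*x = x*x⁻¹ := by rw [h']
              _ = 1 := by group
          · rw [h] at h'; exact hxinvS' (hR'sub h')
        · rcases Finset.mem_insert.mp hyi with h' | h'
          · have hyx : y = x⁻¹ := by rw [← h', inv_inv]
            exact hxinvS' (by rw [← hyx]; exact hR'sub h)
          · exact hR'inv y h h'
      · intro z hzS hz2
        by_cases hzx : z = x
        · exact Or.inl (by rw [hzx]; exact Finset.mem_insert_self _ _)
        · by_cases hzxi : z = x⁻¹
          · right
            rw [hzxi, inv_inv]
            exact Finset.mem_insert_self _ _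
          · have hzS' : z ∈ S' := by
              rw [hS', Finset.mem_erase, Finset.mem_erase]
              exact ⟨hzxi, hzx, hzS⟩
            rcases hR'cov z hzS' hz2 with h | h
            · exact Or.inl (Finset.mem_insert_of_mem h)
            · exact Or.inr (Finset.mem_insert_of_mem h)
    · push_neg at hex
      refine ⟨∅, by simp, by simp, by simp, ?_⟩
      intro z hz hz2
      exact absurd (hex z hz) hz2

private lemma pairing_card [DecidableEq G] {S R : Finset G} (hRS : R ⊆ S) (hRsq : ∀ x ∈ R, x * x ≠ 1)
    (hRinv : ∀ x ∈ R, x⁻¹ ∉ R) (hSinv : ∀ x ∈ S, x⁻¹ ∈ S) :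
    2 * R.card + (S.filter (fun x => x * x = 1)).card ≤ S.card := by
  classical
  set Ri := R.image (fun x => x⁻¹) with hRi
  have hRicard : Ri.card = R.card := Finset.card_image_of_injective _ inv_injective
  have hdisj : Disjoint R Ri := by
    rw [Finset.disjoint_left]
    intro x hx hxi
    obtain ⟨y, hy, hyx⟩ := Finset.mem_image.mp hxi
    exact hRinv y hy (by rw [hyx]; exact hx)
  have hsub : R ∪ Ri ⊆ S.filter (fun x => ¬ x * x = 1) := by
    intro x hx
    rcases Finset.mem_union.mp hx with h | h
    · exact Finset.mem_filter.mpr ⟨hRS h, hRsq x h⟩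
    · obtain ⟨y, hy, hyx⟩ := Finset.mem_image.mp h
      refine Finset.mem_filter.mpr ⟨by rw [← hyx]; exact hSinv y (hRS hy), ?_⟩
      intro hE
      apply hRsq y hy
      rw [← hyx] at hE
      have hyy : y = y⁻¹ := by
        have h5 := inv_eq_of_mul_eq_one_right hE
        rw [inv_inv] at h5
        exact h5
      nth_rewrite 2 [hyy]
      group
  have h1 : (R ∪ Ri).card = 2 * R.card := by
    rw [Finset.card_union_of_disjoint hdisj, hRicard]; ring
  have h2 : (R ∪ Ri).card ≤ (S.filter (fun x => ¬ x * x = 1)).card :=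
    Finset.card_le_card hsub
  have h3 := Finset.card_filter_add_card_filter_not
    (s := S) (p := fun x => x * x = 1)
  omega

end Aux4

section Aux5

variable {G : Type u} [Group G]

private lemma card_le_two [DecidableEq G] (a b : G) : ({a, b} : Finset G).card ≤ 2 := by
  have h1 := Finset.card_insert_le a ({b} : Finset G)
  simp at h1 ⊢
  omega

private lemma card_le_four [DecidableEq G] (a b c d : G) :
    ({a, b, c, d} : Finset G).card ≤ 4 := by
  have h1 := Finset.card_insert_le a ({b, c, d} : Finset G)
  have h2 := Finset.card_insert_le b ({c, d} : Finset G)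
  have h3 := Finset.card_insert_le c ({d} : Finset G)
  simp at h1 h2 h3 ⊢
  omega

private lemma card_le_six [DecidableEq G] (a b c d e f : G) :
    ({a, b, c, d, e, f} : Finset G).card ≤ 6 := by
  have h1 := Finset.card_insert_le a ({b, c, d, e, f} : Finset G)
  have h2 := Finset.card_insert_le b ({c, d, e, f} : Finset G)
  have h3 := Finset.card_insert_le c ({d, e, f} : Finset G)
  have h4 := Finset.card_insert_le d ({e, f} : Finset G)
  have h5 := Finset.card_insert_le e ({f} : Finset G)
  simp at h1 h2 h3 h4 h5 ⊢
  omega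

private lemma assemble {S T : Finset G} (h1S : (1:G) ∉ S)
    (hSsym : (S : Set G)⁻¹ = (S : Set G)) (hSgen : Subgroup.closure (S : Set G) = ⊤)
    (hST : S ⊆ T) (h1T : (1:G) ∉ T) (hTinv : ∀ x ∈ T, x⁻¹ ∈ T)
    (hcard : T.card ≤ 3 * S.card)
    (hforce : ∀ φ : G → G, BallColourAutoFixing (T : Set G) φ → ∀ x ∈ S, φ x = x) :
    ∃ St T' : Finset G, St ⊆ T' ∧ (1 : G) ∉ T' ∧
      (St : Set G)⁻¹ = (St : Set G) ∧ (T' : Set G)⁻¹ = (T' : Set G) ∧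
      Subgroup.closure (St : Set G) = ⊤ ∧ Subgroup.closure (T' : Set G) = ⊤ ∧
      St.card = S.card ∧ T'.card ≤ 3 * S.card ∧
      StronglyOrientationRigid (St : Set G) (T' : Set G) := by
  have hTsym : (T : Set G)⁻¹ = (T : Set G) := by
    ext x
    simp only [Set.mem_inv, Finset.mem_coe]
    constructor
    · intro h; have h2 := hTinv x⁻¹ h; rwa [inv_inv] at h2
    · intro h; exact hTinv x h
  have hTgen : Subgroup.closure (T : Set G) = ⊤ := by
    rw [eq_top_iff, ← hSgen]
    exact Subgroup.closure_mono (by exact_mod_cast hST)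
  refine ⟨S, T, hST, h1T, hSsym, hTsym, hSgen, hTgen, rfl, hcard, ?_⟩
  intro φ hφ x hx
  rcases Set.mem_insert_iff.mp hx with h | h
  · rw [h]; exact hφ.2.1
  · rw [hSsym, Set.union_self] at h
    exact hforce φ hφ x h

end Aux5

/-- **Proposition (better bounds).** Let `G` be a non-abelian finitely generated group
with no elements of order 4, or with no non-trivial abelian characteristic subgroups.
Then for every finite symmetric generating set `S` there are symmetric generating sets
`S̃ ⊆ T` with `|S̃| = |S|`, `|T| ≤ 3|S|` and `(G, S̃, T)` strongly orientation-rigid. -/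
theorem better_bounds_orientation_rigid {G : Type u} [Group G] [Group.FG G]
    (hab : ¬ ∀ a b : G, a * b = b * a)
    (hyp : (∀ g : G, orderOf g ≠ 4) ∨
      (∀ H : Subgroup G, H.Characteristic → (∀ a ∈ H, ∀ b ∈ H, a * b = b * a) → H = ⊥))
    (S : Finset G) (h1S : (1 : G) ∉ S) (hSsym : (S : Set G)⁻¹ = (S : Set G))
    (hSgen : Subgroup.closure (S : Set G) = ⊤) :
    ∃ St T : Finset G, St ⊆ T ∧ (1 : G) ∉ T ∧
      (St : Set G)⁻¹ = (St : Set G) ∧ (T : Set G)⁻¹ = (T : Set G) ∧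
      Subgroup.closure (St : Set G) = ⊤ ∧ Subgroup.closure (T : Set G) = ⊤ ∧
      St.card = S.card ∧ T.card ≤ 3 * S.card ∧
      StronglyOrientationRigid (St : Set G) (T : Set G) := by
  classical
  obtain ⟨a, haS, b, hbS, habS⟩ := exists_noncomm_mem hSgen hab
  have hSinv : ∀ x ∈ S, x⁻¹ ∈ S := by
    intro x hx
    have h2 : (x⁻¹ : G) ∈ (S : Set G) := by
      rw [← hSsym]; simpa using hx
    exact_mod_cast h2
  obtain ⟨R, hRS, hRsq, hRinv, hRcov⟩ := exists_pairing S.card S le_rfl hSinv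
  have hRcard := pairing_card hRS hRsq hRinv hSinv
  set Rnc := R.filter (fun s => ¬ ∀ g : G, s * g = g * s) with hRncdef
  set Rc := R.filter (fun s => ∀ g : G, s * g = g * s) with hRcdef
  have hRsplit : Rc.card + Rnc.card = R.card :=
    Finset.card_filter_add_card_filter_not (p := fun s => ∀ g : G, s * g = g * s)
  have hRncsub : Rnc ⊆ R := Finset.filter_subset _ _
  have hRcsub : Rc ⊆ R := Finset.filter_subset _ _
  -- witness chooser for non-central representatives
  have hwex : ∀ s : G, ∃ t, s ∈ Rnc →
      (s * t ≠ t * s ∧ s * t * s⁻¹ ≠ t⁻¹ ∧ s * s ≠ (t * t)⁻¹) := by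
    intro s
    by_cases hs : s ∈ Rnc
    · have hs2 : s * s ≠ 1 := hRsq s (hRncsub hs)
      have hsnc : ∃ w', s * w' ≠ w' * s := by
        have h3 := (Finset.mem_filter.mp hs).2
        push_neg at h3
        obtain ⟨g, hg⟩ := h3
        exact ⟨g, hg⟩
      obtain ⟨t, ht⟩ := exists_witness hyp hs2 hsnc
      exact ⟨t, fun _ => ht⟩
    · exact ⟨1, fun h => absurd h hs⟩
  choose w hw using hwex
  set gN : G → Finset G := fun s => {w s, (w s)⁻¹, s * w s, (s * w s)⁻¹} with hgNdef
  have hgNcard : ∀ s : G, (gN s).card ≤ 4 := fun s => card_le_four _ _ _ _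
  have hgNinv : ∀ s : G, ∀ x ∈ gN s, x⁻¹ ∈ gN s := by
    intro s x hx
    simp only [hgNdef, Finset.mem_insert, Finset.mem_singleton] at hx ⊢
    rcases hx with h | h | h | h
    · subst h; simp
    · subst h; simp
    · subst h; simp
    · subst h; simp
  have hgN1 : ∀ s ∈ Rnc, (1:G) ∉ gN s := by
    intro s hs h1m
    obtain ⟨hc, -, -⟩ := hw s hs
    simp only [hgNdef, Finset.mem_insert, Finset.mem_singleton] at h1m
    have hwne : w s ≠ 1 := fun h => hc (by rw [h]; group)
    have hswne : s * w s ≠ 1 := by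
      intro h
      have hws : w s = s⁻¹ := by
        calc w s = s⁻¹*(s*w s) := by group
          _ = s⁻¹*1 := by rw [h]
          _ = s⁻¹ := by group
      exact hc (by rw [hws]; group)
    rcases h1m with h | h | h | h
    · exact hwne h.symm
    · exact hwne (inv_eq_one.mp h.symm)
    · exact hswne h.symm
    · exact hswne (inv_eq_one.mp h.symm)
  have hgNmem1 : ∀ s : G, w s ∈ gN s := by intro s; simp [hgNdef]
  have hgNmem2 : ∀ s : G, s * w s ∈ gN s := by intro s; simp [hgNdef]
  by_cases hRcE : Rc = ∅
  · -- Case 1 : no central generators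
    set T := S ∪ Rnc.biUnion gN with hTdef
    have hSTsub : S ⊆ T := Finset.subset_union_left
    have h1T : (1:G) ∉ T := by
      intro h
      rcases Finset.mem_union.mp h with h | h
      · exact h1S h
      · obtain ⟨s, hs, hm⟩ := Finset.mem_biUnion.mp h
        exact hgN1 s hs hm
    have hTinv : ∀ x ∈ T, x⁻¹ ∈ T := by
      intro x hx
      rcases Finset.mem_union.mp hx with h | h
      · exact Finset.mem_union_left _ (hSinv x h)
      · obtain ⟨s, hs, hm⟩ := Finset.mem_biUnion.mp h
        exact Finset.mem_union_right _ (Finset.mem_biUnion.mpr ⟨s, hs, hgNinv s x hm⟩)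
    have hcardT : T.card ≤ 3 * S.card := by
      have h1 : T.card ≤ S.card + (Rnc.biUnion gN).card := Finset.card_union_le _ _
      have h2 : (Rnc.biUnion gN).card ≤ ∑ s ∈ Rnc, (gN s).card := Finset.card_biUnion_le
      have h3 : ∑ s ∈ Rnc, (gN s).card ≤ ∑ s ∈ Rnc, 4 :=
        Finset.sum_le_sum (fun i _ => hgNcard i)
      have h4 : ∑ s ∈ Rnc, (4:ℕ) = 4 * Rnc.card := by
        rw [Finset.sum_const, smul_eq_mul, mul_comm]
      have h5 : Rnc.card ≤ R.card := Finset.card_le_card hRncsub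
      omega
    have hRncall : ∀ x ∈ R, x ∈ Rnc := by
      intro x hx
      by_cases hc : ∀ g : G, x * g = g * x
      · exfalso
        have hxc : x ∈ Rc := Finset.mem_filter.mpr ⟨hx, hc⟩
        rw [hRcE] at hxc
        exact Finset.notMem_empty x hxc
      · exact Finset.mem_filter.mpr ⟨hx, hc⟩
    have hmemT : ∀ x ∈ T, x ∈ (T : Set G) := fun x hx => by exact_mod_cast hx
    have hforce : ∀ φ : G → G, BallColourAutoFixing (T : Set G) φ → ∀ x ∈ S, φ x = x := by
      intro φ hφ x hxS
      by_cases hx2 : x * x = 1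
      · rcases phi_pm hφ (mem_TT_left (hmemT x (hSTsub hxS))) with h | h
        · exact h
        · rw [h, inv_eq_of_mul_eq_one_right hx2]
      · have happly : ∀ y ∈ Rnc, φ y = y ∧ φ y⁻¹ = y⁻¹ := by
          intro y hy
          obtain ⟨hc1, hc2, hc3⟩ := hw y hy
          exact gadgetN hφ
            (hmemT y (hSTsub (hRS (hRncsub hy))))
            (hmemT _ (Finset.mem_union_right _ (Finset.mem_biUnion.mpr ⟨y, hy, hgNmem1 y⟩)))
            (hmemT _ (Finset.mem_union_right _ (Finset.mem_biUnion.mpr ⟨y, hy, hgNmem2 y⟩)))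
            (hRsq y (hRncsub hy)) hc1 hc2 hc3
        rcases hRcov x hxS hx2 with hxR | hxR
        · exact (happly x (hRncall x hxR)).1
        · have h2 := (happly x⁻¹ (hRncall x⁻¹ hxR)).2
          rwa [inv_inv] at h2
    exact assemble h1S hSsym hSgen hSTsub h1T hTinv hcardT hforce
  · -- Case 2 : there are central generators
    -- Step A: find t₁ (non-central, non-involution) whose image under any ball
    -- automorphism is forced, together with an auxiliary finset E of extra generators.
    have hstep : ∃ (t₁ : G) (E : Finset G),
        (¬ ∀ g : G, t₁ * g = g * t₁) ∧ t₁ * t₁ ≠ 1 ∧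
        (∀ x ∈ E, x⁻¹ ∈ E) ∧ ((1:G) ∉ E) ∧ (t₁ ∈ S ∪ E) ∧
        (Rnc = ∅ → E.card ≤ 6) ∧ (Rnc ≠ ∅ → E = ∅) ∧
        (∀ T' : Finset G, S ⊆ T' → (∀ s ∈ Rnc, gN s ⊆ T') → E ⊆ T' →
          ∀ φ : G → G, BallColourAutoFixing (T' : Set G) φ → φ t₁ = t₁ ∧ φ t₁⁻¹ = t₁⁻¹) := by
      by_cases hRncE : Rnc = ∅
      · obtain ⟨t₁, ht₁w, ht₁2⟩ := exists_noncentral_sq habS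
        obtain ⟨u, hu1, hu2, hu3⟩ := exists_witness hyp ht₁2 ht₁w
        have ht₁ne1 : t₁ ≠ 1 := fun h => ht₁2 (by rw [h, one_mul])
        have hune1 : u ≠ 1 := fun h => hu1 (by rw [h]; group)
        have ht₁une1 : t₁ * u ≠ 1 := by
          intro h
          have hus : u = t₁⁻¹ := by
            calc u = t₁⁻¹*(t₁*u) := by group
              _ = t₁⁻¹*1 := by rw [h]
              _ = t₁⁻¹ := by group
          exact hu1 (by rw [hus]; group)
        refine ⟨t₁, {t₁, t₁⁻¹, u, u⁻¹, t₁*u, (t₁*u)⁻¹},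
          (fun hall => by obtain ⟨w₀, hw₀⟩ := ht₁w; exact hw₀ (hall w₀)), ht₁2, ?_, ?_,
          Finset.mem_union_right _ (by simp), fun _ => card_le_six _ _ _ _ _ _,
          fun h => absurd hRncE h, ?_⟩
        · intro x hx
          simp only [Finset.mem_insert, Finset.mem_singleton] at hx ⊢
          rcases hx with h | h | h | h | h | h <;> subst h <;> simp
        · intro h1m
          simp only [Finset.mem_insert, Finset.mem_singleton] at h1m
          rcases h1m with h | h | h | h | h | h
          · exact ht₁ne1 h.symm
          · exact ht₁ne1 (inv_eq_one.mp h.symm)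
          · exact hune1 h.symm
          · exact hune1 (inv_eq_one.mp h.symm)
          · exact ht₁une1 h.symm
          · exact ht₁une1 (inv_eq_one.mp h.symm)
        · intro T' hST' hgNT' hET' φ hφ
          have hmemT' : ∀ x ∈ T', x ∈ (T' : Set G) := fun x hx => by exact_mod_cast hx
          exact gadgetN hφ
            (hmemT' _ (hET' (by simp)))
            (hmemT' _ (hET' (by simp)))
            (hmemT' _ (hET' (by simp)))
            ht₁2 hu1 hu2 hu3
      · obtain ⟨a₀, ha₀⟩ := Finset.nonempty_of_ne_empty hRncE
        refine ⟨a₀, ∅,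
          (Finset.mem_filter.mp ha₀).2, hRsq a₀ (hRncsub ha₀), by simp, by simp,
          Finset.mem_union_left _ (hRS (hRncsub ha₀)), fun h => absurd h hRncE,
          fun _ => rfl, ?_⟩
        intro T' hST' hgNT' hET' φ hφ
        have hmemT' : ∀ x ∈ T', x ∈ (T' : Set G) := fun x hx => by exact_mod_cast hx
        obtain ⟨hc1, hc2, hc3⟩ := hw a₀ ha₀
        exact gadgetN hφ
          (hmemT' _ (hST' (hRS (hRncsub ha₀))))
          (hmemT' _ (hgNT' a₀ ha₀ (hgNmem1 a₀)))
          (hmemT' _ (hgNT' a₀ ha₀ (hgNmem2 a₀)))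
          (hRsq a₀ (hRncsub ha₀)) hc1 hc2 hc3
    obtain ⟨t₁, E, ht₁nc, ht₁2, hEinv, hE1, ht₁SE, hEcard6, hEempty, hforceT₁⟩ := hstep
    -- Step B: choose the witness t(s) ∈ {t₁, t₁⁻¹} for each central generator
    have htcex : ∀ s : G, ∃ t, s ∈ Rc →
        ((t = t₁ ∨ t = t₁⁻¹) ∧ s * s ≠ (t * t)⁻¹ ∧ t * t ≠ 1) := by
      intro s
      by_cases hs : s ∈ Rc
      · have hcen : ∀ g : G, s * g = g * s := (Finset.mem_filter.mp hs).2
        have hs2 : s * s ≠ 1 := hRsq s (hRcsub hs)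
        by_cases hB : s * s = (t₁ * t₁)⁻¹
        · refine ⟨t₁⁻¹, fun _ => ⟨Or.inr rfl, ?_, ?_⟩⟩
          · intro hE2
            rw [mul_inv_rev, inv_inv] at hE2
            have he : t₁*t₁ = (t₁*t₁)⁻¹ := hE2.symm.trans hB
            have h4 : (t₁*t₁)*(t₁*t₁) = 1 := by
              nth_rewrite 2 [he]
              group
            have hs1 : s ≠ 1 := fun h => hs2 (by rw [h, one_mul])
            exact hyp_contra hyp hcen hs1 ht₁2 h4
          · intro hE2
            rw [← mul_inv_rev] at hE2
            exact ht₁2 (inv_eq_one.mp hE2)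
        · exact ⟨t₁, fun _ => ⟨Or.inl rfl, hB, ht₁2⟩⟩
      · exact ⟨1, fun h => absurd h hs⟩
    choose tc htc using htcex
    set gC : G → Finset G := fun s => {s * tc s, (s * tc s)⁻¹} with hgCdef
    have hgCcard : ∀ s : G, (gC s).card ≤ 2 := fun s => card_le_two _ _
    have hgCinv : ∀ s : G, ∀ x ∈ gC s, x⁻¹ ∈ gC s := by
      intro s x hx
      simp only [hgCdef, Finset.mem_insert, Finset.mem_singleton] at hx ⊢
      rcases hx with h | h
      · subst h; simp
      · subst h; simp
    have htcnc : ∀ s ∈ Rc, ¬ ∀ g : G, tc s * g = g * tc s := by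
      intro s hs hcall
      obtain ⟨hch, -, -⟩ := htc s hs
      rcases hch with h | h
      · rw [h] at hcall; exact ht₁nc hcall
      · rw [h] at hcall
        apply ht₁nc
        have h2 := inv_central hcall
        intro g
        have h3 := h2 g
        rwa [inv_inv] at h3
    have hgC1 : ∀ s ∈ Rc, (1:G) ∉ gC s := by
      intro s hs h1m
      have hcen : ∀ g : G, s * g = g * s := (Finset.mem_filter.mp hs).2
      have hne : s * tc s ≠ 1 := by
        intro h
        have hts : tc s = s⁻¹ := by
          calc tc s = s⁻¹*(s*tc s) := by group
            _ = s⁻¹*1 := by rw [h]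
            _ = s⁻¹ := by group
        apply htcnc s hs
        rw [hts]
        exact inv_central hcen
      simp only [hgCdef, Finset.mem_insert, Finset.mem_singleton] at h1m
      rcases h1m with h | h
      · exact hne h.symm
      · exact hne (inv_eq_one.mp h.symm)
    have hgCmem : ∀ s : G, s * tc s ∈ gC s := by intro s; simp [hgCdef]
    -- The big generating set
    set T := S ∪ Rnc.biUnion gN ∪ E ∪ Rc.biUnion gC with hTdef
    have hSTsub : S ⊆ T := by
      intro x hx
      exact Finset.mem_union_left _ (Finset.mem_union_left _ (Finset.mem_union_left _ hx))
    have hgNTsub : ∀ s ∈ Rnc, gN s ⊆ T := by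
      intro s hs x hx
      exact Finset.mem_union_left _ (Finset.mem_union_left _
        (Finset.mem_union_right _ (Finset.mem_biUnion.mpr ⟨s, hs, hx⟩)))
    have hETsub : E ⊆ T := fun x hx =>
      Finset.mem_union_left _ (Finset.mem_union_right _ hx)
    have hgCTsub : ∀ s ∈ Rc, gC s ⊆ T := by
      intro s hs x hx
      exact Finset.mem_union_right _ (Finset.mem_biUnion.mpr ⟨s, hs, hx⟩)
    have h1T : (1:G) ∉ T := by
      intro h
      rcases Finset.mem_union.mp h with h | h
      · rcases Finset.mem_union.mp h with h | h
        · rcases Finset.mem_union.mp h with h | h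
          · exact h1S h
          · obtain ⟨s, hs, hm⟩ := Finset.mem_biUnion.mp h
            exact hgN1 s hs hm
        · exact hE1 h
      · obtain ⟨s, hs, hm⟩ := Finset.mem_biUnion.mp h
        exact hgC1 s hs hm
    have hTinv : ∀ x ∈ T, x⁻¹ ∈ T := by
      intro x hx
      rcases Finset.mem_union.mp hx with h | h
      · rcases Finset.mem_union.mp h with h | h
        · rcases Finset.mem_union.mp h with h | h
          · exact hSTsub (hSinv x h)
          · obtain ⟨s, hs, hm⟩ := Finset.mem_biUnion.mp h
            exact hgNTsub s hs (hgNinv s x hm)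
        · exact hETsub (hEinv x h)
      · obtain ⟨s, hs, hm⟩ := Finset.mem_biUnion.mp h
        exact hgCTsub s hs (hgCinv s x hm)
    have ht₁T : t₁ ∈ T := by
      rcases Finset.mem_union.mp ht₁SE with h | h
      · exact hSTsub h
      · exact hETsub h
    have ht₁iT : t₁⁻¹ ∈ T := hTinv t₁ ht₁T
    -- cardinality
    have hcardT : T.card ≤ 3 * S.card := by
      have h0 : T.card ≤ S.card + (Rnc.biUnion gN).card + E.card + (Rc.biUnion gC).card := by
        calc T.card ≤ (S ∪ Rnc.biUnion gN ∪ E).card + (Rc.biUnion gC).card :=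
              Finset.card_union_le _ _
          _ ≤ (S ∪ Rnc.biUnion gN).card + E.card + (Rc.biUnion gC).card := by
              have := Finset.card_union_le (S ∪ Rnc.biUnion gN) E
              omega
          _ ≤ S.card + (Rnc.biUnion gN).card + E.card + (Rc.biUnion gC).card := by
              have := Finset.card_union_le S (Rnc.biUnion gN)
              omega
      have h2 : (Rnc.biUnion gN).card ≤ 4 * Rnc.card := by
        calc (Rnc.biUnion gN).card ≤ ∑ s ∈ Rnc, (gN s).card := Finset.card_biUnion_le
          _ ≤ ∑ s ∈ Rnc, 4 := Finset.sum_le_sum (fun i _ => hgNcard i)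
          _ = 4 * Rnc.card := by rw [Finset.sum_const, smul_eq_mul, mul_comm]
      have h3 : (Rc.biUnion gC).card ≤ 2 * Rc.card := by
        calc (Rc.biUnion gC).card ≤ ∑ s ∈ Rc, (gC s).card := Finset.card_biUnion_le
          _ ≤ ∑ s ∈ Rc, 2 := Finset.sum_le_sum (fun i _ => hgCcard i)
          _ = 2 * Rc.card := by rw [Finset.sum_const, smul_eq_mul, mul_comm]
      have hRcpos : 1 ≤ Rc.card := Finset.card_pos.mpr (Finset.nonempty_of_ne_empty hRcE)
      by_cases hRncE : Rnc = ∅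
      · -- need at least two involutions in S
        have hanc : ¬ ∀ g : G, a * g = g * a := fun h => habS (h b)
        have hbnc : ¬ ∀ g : G, b * g = g * b := fun h => habS (h a).symm
        have hinvol : ∀ z ∈ S, (¬ ∀ g : G, z * g = g * z) → z * z = 1 := by
          intro z hzS hznc
          by_contra hz2
          rcases hRcov z hzS hz2 with h | h
          · have : z ∈ Rnc := Finset.mem_filter.mpr ⟨h, hznc⟩
            rw [hRncE] at this
            exact Finset.notMem_empty z this
          · have hzinc : ¬ ∀ g : G, z⁻¹ * g = g * z⁻¹ := by
              intro hc
              apply hznc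
              intro g
              have h3 := inv_central hc g
              rwa [inv_inv] at h3
            have : z⁻¹ ∈ Rnc := Finset.mem_filter.mpr ⟨h, hzinc⟩
            rw [hRncE] at this
            exact Finset.notMem_empty z⁻¹ this
        have ha2 := hinvol a haS hanc
        have hb2 := hinvol b hbS hbnc
        have hne : a ≠ b := fun h => habS (by rw [h])
        have hI2 : 2 ≤ (S.filter (fun x => x * x = 1)).card := by
          have hsub : ({a, b} : Finset G) ⊆ S.filter (fun x => x * x = 1) := by
            intro z hz
            rcases Finset.mem_insert.mp hz with h | h
            · subst h; exact Finset.mem_filter.mpr ⟨haS, ha2⟩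
            · rw [Finset.mem_singleton] at h
              subst h; exact Finset.mem_filter.mpr ⟨hbS, hb2⟩
          calc 2 = ({a, b} : Finset G).card := (Finset.card_pair hne).symm
            _ ≤ _ := Finset.card_le_card hsub
        have hE6 := hEcard6 hRncE
        have hRnc0 : Rnc.card = 0 := by rw [hRncE]; simp
        omega
      · have hE0 : E.card = 0 := by rw [hEempty hRncE]; simp
        omega
    -- forcing
    have hmemT : ∀ x ∈ T, x ∈ (T : Set G) := fun x hx => by exact_mod_cast hx
    have hforce : ∀ φ : G → G, BallColourAutoFixing (T : Set G) φ → ∀ x ∈ S, φ x = x := by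
      intro φ hφ x hxS
      have hφt₁ := hforceT₁ T hSTsub hgNTsub hETsub φ hφ
      by_cases hx2 : x * x = 1
      · rcases phi_pm hφ (mem_TT_left (hmemT x (hSTsub hxS))) with h | h
        · exact h
        · rw [h, inv_eq_of_mul_eq_one_right hx2]
      · have happly : ∀ y ∈ R, φ y = y ∧ φ y⁻¹ = y⁻¹ := by
          intro y hy
          by_cases hc : ∀ g : G, y * g = g * y
          · -- central generator : use gadgetC
            have hyRc : y ∈ Rc := Finset.mem_filter.mpr ⟨hy, hc⟩
            obtain ⟨hch, hBy, ht2y⟩ := htc y hyRc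
            have hφtc : φ (tc y) = tc y := by
              rcases hch with h | h
              · rw [h]; exact hφt₁.1
              · rw [h]; exact hφt₁.2
            have htcT : tc y ∈ T := by
              rcases hch with h | h
              · rw [h]; exact ht₁T
              · rw [h]; exact ht₁iT
            exact gadgetC hφ
              (hmemT y (hSTsub (hRS hy)))
              (hmemT _ htcT)
              (hmemT _ (hgCTsub y hyRc (hgCmem y)))
              hc (hRsq y hy) ht2y hBy hφtc
          · -- non-central generator : use gadgetN
            have hyRnc : y ∈ Rnc := Finset.mem_filter.mpr ⟨hy, hc⟩
            obtain ⟨hc1, hc2, hc3⟩ := hw y hyRnc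
            exact gadgetN hφ
              (hmemT y (hSTsub (hRS hy)))
              (hmemT _ (hgNTsub y hyRnc (hgNmem1 y)))
              (hmemT _ (hgNTsub y hyRnc (hgNmem2 y)))
              (hRsq y hy) hc1 hc2 hc3
        rcases hRcov x hxS hx2 with hxR | hxR
        · exact (happly x hxR).1
        · have h2 := (happly x⁻¹ hxR).2
          rwa [inv_inv] at h2
    exact assemble h1S hSsym hSgen hSTsub h1T hTinv hcardT hforce
end

section
/- Let (G,S,T) be a strong GRR triple. Then for any covering ψ: Cay(G,T) → Δ whose restrictions to balls of radius 1 are isomorphisms, there exists a subgraph Δ̃ of Δ such that the restriction of ψ to Cay(G,S) is a covering onto Δ̃ which is compatible with the labels of Cay(G,S). Moreover, Δ̃ is globally invariant under the action of the automorphism group of Δ. -/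
open scoped Pointwise

universe u v

section AuxLemmas

variable {G : Type u} [Group G]

lemma one_notin_union {T : Set G} (h1T : (1 : G) ∉ T) : (1 : G) ∉ T ∪ T⁻¹ := by
  rintro (h | h)
  · exact h1T h
  · exact h1T (by simpa using h)

lemma mem_ballGT {T : Set G} (h1T : (1 : G) ∉ T) {g h : G} :
    h ∈ insert g ((cayleyGraph G T).neighborSet g) ↔ g⁻¹ * h ∈ ball1 T := by
  constructor
  · rintro (rfl | hh)
    · exact Set.mem_insert_iff.mpr (Or.inl (by group))
    · exact Set.mem_insert_iff.mpr (Or.inr hh.2)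
  · intro hh
    rcases Set.mem_insert_iff.mp hh with h1 | h2
    · left; exact (inv_mul_eq_one.mp h1).symm ▸ rfl
    · right
      refine SimpleGraph.mem_neighborSet _ _ _ |>.mpr ⟨?_, h2⟩
      intro hgh
      exact one_notin_union h1T (by rw [hgh] at h2; simpa using h2)

lemma cay_adj_mul {T : Set G} (a g h : G) :
    (cayleyGraph G T).Adj (a * g) (a * h) ↔ (cayleyGraph G T).Adj g h := by
  have h1 : (a * g)⁻¹ * (a * h) = g⁻¹ * h := by group
  constructor
  · rintro ⟨hne, hm⟩
    exact ⟨fun he => hne (he ▸ rfl), by rwa [h1] at hm⟩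
  · rintro ⟨hne, hm⟩
    exact ⟨fun he => hne (mul_left_cancel he), by rwa [h1]⟩

lemma auto_ball {W : Type v} {Δ : SimpleGraph W} {φ : Equiv.Perm W}
    (hφ : IsGraphAuto Δ φ) (x : W) :
    Set.BijOn φ (insert x (Δ.neighborSet x)) (insert (φ x) (Δ.neighborSet (φ x))) := by
  refine ⟨?_, φ.injective.injOn, ?_⟩
  · rintro y (rfl | hy)
    · exact Set.mem_insert _ _
    · exact Set.mem_insert_of_mem _ ((hφ x y).mpr hy)
  · rintro z (rfl | hz)
    · exact ⟨x, Set.mem_insert _ _, rfl⟩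
    · refine ⟨φ.symm z, Set.mem_insert_of_mem _ ?_, by simp⟩
      exact (hφ x (φ.symm z)).mp (by simpa using hz)

lemma isGraphAuto_refl {W : Type v} (Δ : SimpleGraph W) :
    IsGraphAuto Δ (Equiv.refl W) := fun _ _ => Iff.rfl

lemma isGraphAuto_trans {W : Type v} {Δ : SimpleGraph W} {φ₀ φ : Equiv.Perm W}
    (h₀ : IsGraphAuto Δ φ₀) (h : IsGraphAuto Δ φ) : IsGraphAuto Δ (φ₀.trans φ) := by
  intro x y
  simp only [Equiv.trans_apply]
  exact (h _ _).trans (h₀ _ _)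

lemma isGraphAuto_symm {W : Type v} {Δ : SimpleGraph W} {φ : Equiv.Perm W}
    (h : IsGraphAuto Δ φ) : IsGraphAuto Δ φ.symm := by
  intro x y
  have := (h (φ.symm x) (φ.symm y)).symm
  simpa using this

lemma core_lemma {S T : Set G} (hST : S ⊆ T) (h1T : (1 : G) ∉ T)
    (hstrong : StrongGRRTriple S T)
    {W : Type v} {Δ : SimpleGraph W} {ψ : G → W}
    (hball : ∀ v : G, BallIsoAt (cayleyGraph G T) Δ ψ v)
    (φ : Equiv.Perm W) (hφ : IsGraphAuto Δ φ) (g' g : G) (hgg : φ (ψ g') = ψ g) :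
    ∀ x ∈ ball1 S, φ (ψ (g' * x)) = ψ (g * x) := by
  haveI : Nonempty G := ⟨g⟩
  set B' : Set G := insert g' ((cayleyGraph G T).neighborSet g') with hB'
  set B : Set G := insert g ((cayleyGraph G T).neighborSet g) with hB
  set D' : Set W := insert (ψ g') (Δ.neighborSet (ψ g')) with hD'
  set D : Set W := insert (ψ g) (Δ.neighborSet (ψ g)) with hD
  have h1 : Set.BijOn ψ B' D' := (hball g').1
  have h3 : Set.BijOn ψ B D := (hball g).1
  have h2 : Set.BijOn φ D' D := by
    have := auto_ball hφ (ψ g')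
    rwa [hgg] at this
  set ρ : W → G := Function.invFunOn ψ B with hρdef
  have hinv : Set.InvOn ρ ψ B D := h3.invOn_invFunOn
  have hρ : Set.BijOn ρ D B := Set.BijOn.symm hinv.symm h3
  have hSub : ball1 S ⊆ ball1 T := by
    rintro x (rfl | hx)
    · exact Set.mem_insert _ _
    · refine Set.mem_insert_of_mem _ ?_
      rcases hx with hx | hx
      · exact Or.inl (hST hx)
      · exact Or.inr (Set.inv_subset_inv.mpr hST hx)
  have hmem' : ∀ x ∈ ball1 T, g' * x ∈ B' := fun x hx =>
    (mem_ballGT h1T).mpr (by rwa [inv_mul_cancel_left])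
  have hmem : ∀ x ∈ ball1 T, g * x ∈ B := fun x hx =>
    (mem_ballGT h1T).mpr (by rwa [inv_mul_cancel_left])
  have hchain : ∀ u ∈ B', φ (ψ u) ∈ D := fun u hu => h2.mapsTo (h1.mapsTo hu)
  set Φ : G → G := fun x => g⁻¹ * ρ (φ (ψ (g' * x))) with hΦdef
  have hbij1 : Set.BijOn (fun x => g' * x) (ball1 T) B' := by
    refine ⟨hmem', fun a _ b _ hab => mul_left_cancel hab, fun u hu => ?_⟩
    exact ⟨g'⁻¹ * u, (mem_ballGT h1T).mp hu, by group⟩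
  have hbij5 : Set.BijOn (fun y => g⁻¹ * y) B (ball1 T) := by
    refine ⟨fun u hu => (mem_ballGT h1T).mp hu, fun a _ b _ hab => mul_left_cancel hab,
      fun x hx => ⟨g * x, hmem x hx, by group⟩⟩
  have hΦbij : Set.BijOn Φ (ball1 T) (ball1 T) := by
    have := ((((hbij5.comp hρ).comp h2).comp h1).comp hbij1)
    exact this
  have hΦ1 : Φ 1 = 1 := by
    have : ρ (ψ g) = g := hinv.1 (Set.mem_insert _ _)
    simp only [hΦdef, mul_one, hgg, this, inv_mul_cancel]
  have hΦadj : ∀ x ∈ ball1 T, ∀ y ∈ ball1 T,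
      ((cayleyGraph G T).Adj (Φ x) (Φ y) ↔ (cayleyGraph G T).Adj x y) := by
    intro x hx y hy
    have hu : g' * x ∈ B' := hmem' x hx
    have hv : g' * y ∈ B' := hmem' y hy
    have hcu : φ (ψ (g' * x)) ∈ D := hchain _ hu
    have hcv : φ (ψ (g' * y)) ∈ D := hchain _ hv
    have hψρu : ψ (ρ (φ (ψ (g' * x)))) = φ (ψ (g' * x)) := hinv.2 hcu
    have hψρv : ψ (ρ (φ (ψ (g' * y)))) = φ (ψ (g' * y)) := hinv.2 hcv
    calc (cayleyGraph G T).Adj (Φ x) (Φ y)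
        ↔ (cayleyGraph G T).Adj (ρ (φ (ψ (g' * x)))) (ρ (φ (ψ (g' * y)))) :=
          cay_adj_mul g⁻¹ _ _
      _ ↔ Δ.Adj (ψ (ρ (φ (ψ (g' * x))))) (ψ (ρ (φ (ψ (g' * y))))) :=
          (hball g).2 _ (hρ.mapsTo hcu) _ (hρ.mapsTo hcv)
      _ ↔ Δ.Adj (φ (ψ (g' * x))) (φ (ψ (g' * y))) := by rw [hψρu, hψρv]
      _ ↔ Δ.Adj (ψ (g' * x)) (ψ (g' * y)) := hφ _ _
      _ ↔ (cayleyGraph G T).Adj (g' * x) (g' * y) := ((hball g').2 _ hu _ hv).symm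
      _ ↔ (cayleyGraph G T).Adj x y := cay_adj_mul g' x y
  have hfix := hstrong Φ ⟨hΦbij, hΦ1, hΦadj⟩
  intro x hx
  have hΦx : Φ x = x := hfix x hx
  have hx' : x ∈ ball1 T := hSub hx
  have hcu : φ (ψ (g' * x)) ∈ D := hchain _ (hmem' x hx')
  have hρeq : ρ (φ (ψ (g' * x))) = g * x := by
    have := hΦx
    simp only [hΦdef] at this
    rw [inv_mul_eq_iff_eq_mul] at this
    exact this
  have := hinv.2 hcu
  rw [hρeq] at this
  exact this.symm

end AuxLemmas

/-- **Proposition (coverings).** If `(G,S,T)` is a strong GRR triple, then every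
covering `ψ : Cay(G,T) → Δ` whose restrictions to balls of radius 1 are isomorphisms
restricts on `Cay(G,S)` to a covering onto a subgraph `Δ'` of `Δ`, compatible with the
labels of `Cay(G,S)`; moreover `Δ'` is invariant under all automorphisms of `Δ`. -/
theorem coverings_of_strong_GRR {G : Type u} [Group G] (S T : Set G) (hST : S ⊆ T)
    (h1T : (1 : G) ∉ T) (hSgen : Subgroup.closure S = ⊤)
    (hTgen : Subgroup.closure T = ⊤) (hstrong : StrongGRRTriple S T)
    {W : Type v} (Δ : SimpleGraph W) (ψ : G → W)
    (hcov : IsGraphCovering (cayleyGraph G T) Δ ψ)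
    (hball : ∀ v : G, BallIsoAt (cayleyGraph G T) Δ ψ v) :
    ∃ Δ' : SimpleGraph W, Δ' ≤ Δ ∧ IsGraphCovering (cayleyGraph G S) Δ' ψ ∧
      CompatibleWithLabels S ψ ∧
      ∀ φ : Equiv.Perm W, IsGraphAuto Δ φ →
        ∀ x y : W, Δ'.Adj (φ x) (φ y) ↔ Δ'.Adj x y := by
  haveI : Nonempty G := ⟨1⟩
  have h1ST : (1 : G) ∉ S ∪ S⁻¹ := one_notin_union (fun h => h1T (hST h))
  have hadjST : ∀ {g h : G}, (cayleyGraph G S).Adj g h → (cayleyGraph G T).Adj g h := by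
    rintro g h ⟨hne, hm⟩
    refine ⟨hne, ?_⟩
    rcases hm with hm | hm
    · exact Or.inl (hST hm)
    · exact Or.inr (Set.inv_subset_inv.mpr hST hm)
  have hmemball : ∀ {g h : G}, (cayleyGraph G T).Adj g h →
      h ∈ insert g ((cayleyGraph G T).neighborSet g) :=
    fun h => Set.mem_insert_of_mem _ h
  have hinjball : ∀ g : G, Set.InjOn ψ (insert g ((cayleyGraph G T).neighborSet g)) :=
    fun g => (hball g).1.injOn
  -- the saturated image graph
  set Adj' : W → W → Prop := fun x y => ∃ (φ : Equiv.Perm W) (g h : G),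
    IsGraphAuto Δ φ ∧ (cayleyGraph G S).Adj g h ∧ φ (ψ g) = x ∧ φ (ψ h) = y with hAdj'
  have hsymm : ∀ x y, Adj' x y → Adj' y x := by
    rintro x y ⟨φ, g, h, hφ, hgh, hgx, hhy⟩
    exact ⟨φ, h, g, hφ, hgh.symm, hhy, hgx⟩
  have hloop : ∀ x, ¬ Adj' x x := by
    rintro x ⟨φ, g, h, hφ, hgh, hgx, hhx⟩
    have hψ : ψ g = ψ h := φ.injective (hgx.trans hhx.symm)
    have : g = h := hinjball g (Set.mem_insert _ _) (hmemball (hadjST hgh)) hψ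
    exact hgh.1 this
  refine ⟨⟨Adj', ⟨hsymm⟩, ⟨hloop⟩⟩, ?_, ?_, ?_, ?_⟩
  · -- Δ' ≤ Δ
    rintro x y ⟨φ, g, h, hφ, hgh, rfl, rfl⟩
    exact (hφ _ _).mpr (((hball g).2 g (Set.mem_insert _ _) h
      (hmemball (hadjST hgh))).mp (hadjST hgh))
  · -- covering
    intro g
    refine ⟨?_, ?_, ?_⟩
    · intro h hh
      exact ⟨Equiv.refl W, g, h, isGraphAuto_refl Δ, hh, rfl, rfl⟩
    · exact (hinjball g).mono (fun h hh =>
        hmemball (hadjST (SimpleGraph.mem_neighborSet _ _ _ |>.mp hh)))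
    · rintro w ⟨φ, g1, h1, hφ, hgh1, hg1, hh1⟩
      set x : G := g1⁻¹ * h1 with hxdef
      have hxS : x ∈ S ∪ S⁻¹ := hgh1.2
      have hxball : x ∈ ball1 S := Set.mem_insert_of_mem _ hxS
      have hkey := core_lemma hST h1T hstrong hball φ hφ g1 g hg1 x hxball
      have hg1x : g1 * x = h1 := by rw [hxdef]; group
      rw [hg1x] at hkey
      have hxne : x ≠ 1 := fun hx1 => h1ST (hx1 ▸ hxS)
      refine ⟨g * x, ?_, hh1 ▸ hkey ▸ rfl⟩
      refine SimpleGraph.mem_neighborSet _ _ _ |>.mpr ⟨?_, by rwa [inv_mul_cancel_left]⟩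
      intro he
      exact hxne (by have := he.symm; rwa [mul_eq_left] at this)
  · -- compatible with labels
    intro g h g1 h1 hgh hgh1 hψg hψh
    set x : G := g1⁻¹ * h1 with hxdef
    have hxball : x ∈ ball1 S := Set.mem_insert_of_mem _ hgh1.2
    have hkey := core_lemma hST h1T hstrong hball (Equiv.refl W)
      (isGraphAuto_refl Δ) g1 g (by simpa using hψg.symm) x hxball
    have hg1x : g1 * x = h1 := by rw [hxdef]; group
    rw [hg1x] at hkey
    simp only [Equiv.refl_apply] at hkey
    have hgx : (cayleyGraph G T).Adj g (g * x) := by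
      refine ⟨?_, by rw [inv_mul_cancel_left]; exact hadjST hgh1 |>.2⟩
      intro he
      have hxne : x ≠ 1 := fun hx1 => one_notin_union h1T (hx1 ▸ (hadjST hgh1).2)
      exact hxne (by have := he.symm; rwa [mul_eq_left] at this)
    have heq : g * x = h := hinjball g (hmemball hgx) (hmemball (hadjST hgh))
      (hkey ▸ hψh.symm)
    left
    rw [← heq, hxdef]
    group
  · -- invariance
    have mono : ∀ (φ : Equiv.Perm W), IsGraphAuto Δ φ →
        ∀ x y : W, Adj' x y → Adj' (φ x) (φ y) := by
      rintro φ hφ x y ⟨φ₀, g, h, hφ₀, hgh, hgx, hhy⟩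
      exact ⟨φ₀.trans φ, g, h, isGraphAuto_trans hφ₀ hφ, hgh,
        by simp [Equiv.trans_apply, hgx], by simp [Equiv.trans_apply, hhy]⟩
    intro φ hφ x y
    constructor
    · intro hxy
      have := mono φ.symm (isGraphAuto_symm hφ) _ _ hxy
      simpa using this
    · exact mono φ hφ x y
end

section
/- Let G be a group and S a generating set with 1 ∉ S. If (G,S) is a colour-rigid pair, then S contains a generating subset S' of G such that the directed Cayley graph Cay⃗(G,S') is a DRR. -/
open scoped Pointwise

universe u v

/-- **Proposition.** If `(G,S)` is a colour-rigid pair, then `S` contains a generating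
subset `S'` such that the directed Cayley graph `Cay⃗(G,S')` is a DRR. -/
theorem colour_rigid_gives_DRR {G : Type u} [Group G] (S : Set G) (h1S : (1 : G) ∉ S)
    (hgen : Subgroup.closure S = ⊤) (hcr : ColourRigidPair S) :
    ∃ S' ⊆ S, Subgroup.closure S' = ⊤ ∧ IsDRR S' := by
  classical
  set r : G → G → Prop := WellOrderingRel with hr
  set S' : Set G := {s ∈ S | s⁻¹ ∉ S ∨ s = s⁻¹ ∨ r s s⁻¹} with hS'
  have hsub : S' ⊆ S := fun s hs => hs.1
  have hcover : S ⊆ S' ∪ S'⁻¹ := by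
    intro s hs
    by_cases h1 : s⁻¹ ∉ S ∨ s = s⁻¹ ∨ r s s⁻¹
    · exact Or.inl ⟨hs, h1⟩
    · push_neg at h1
      obtain ⟨hinv, hne, hnr⟩ := h1
      refine Or.inr ?_
      rw [Set.mem_inv]
      refine ⟨hinv, Or.inr (Or.inr ?_)⟩
      rw [inv_inv]
      rcases trichotomous_of r s⁻¹ s with h | h | h
      · exact h
      · exact absurd h.symm hne
      · exact absurd h hnr
  have hrigid : ∀ s ∈ S', s⁻¹ ∈ S' → s = s⁻¹ := by
    intro s hs hsi
    by_contra hne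
    have h1 : r s s⁻¹ := by
      rcases hs.2 with h | h | h
      · exact absurd (hsub hsi) h
      · exact absurd h hne
      · exact h
    have h2 : r s⁻¹ s := by
      rcases hsi.2 with h | h | h
      · rw [inv_inv] at h; exact absurd (hsub hs) h
      · rw [inv_inv] at h; exact absurd h.symm hne
      · rw [inv_inv] at h; exact h
    have h3 : r s s := _root_.trans h1 h2
    exact irrefl s h3
  have hmemiff : ∀ g : G, g ∈ S ∪ S⁻¹ ↔ (g ∈ S' ∨ g⁻¹ ∈ S') := by
    intro g
    constructor
    · rintro (hg | hg)
      · rcases hcover hg with h | h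
        · exact Or.inl h
        · exact Or.inr (Set.mem_inv.mp h)
      · rcases hcover (Set.mem_inv.mp hg) with h | h
        · exact Or.inr h
        · rw [Set.mem_inv, inv_inv] at h
          exact Or.inl h
    · rintro (hg | hg)
      · exact Or.inl (hsub hg)
      · exact Or.inr (Set.mem_inv.mpr (hsub hg))
  have hgen' : Subgroup.closure S' = ⊤ := by
    apply le_antisymm le_top
    rw [← hgen, Subgroup.closure_le]
    intro s hs
    rcases hcover hs with h | h
    · exact Subgroup.subset_closure h
    · have : s⁻¹ ∈ Subgroup.closure S' := Subgroup.subset_closure (Set.mem_inv.mp h)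
      simpa using inv_mem this
  refine ⟨S', hsub, hgen', ?_⟩
  · -- IsDRR S'
    intro φ harcs
    have key : ∀ x y : G, ((φ x)⁻¹ * φ y ∈ S ∪ S⁻¹ ↔ x⁻¹ * y ∈ S ∪ S⁻¹) := by
      intro x y
      rw [hmemiff, hmemiff, harcs x y, mul_inv_rev, inv_inv, mul_inv_rev, inv_inv,
        harcs y x]
    have hauto : IsGraphAuto (cayleyGraph G S) φ := by
      intro x y
      show (φ x ≠ φ y ∧ (φ x)⁻¹ * φ y ∈ S ∪ S⁻¹) ↔ (x ≠ y ∧ x⁻¹ * y ∈ S ∪ S⁻¹)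
      exact and_congr φ.injective.ne_iff (key x y)
    have hcp : IsColourPreserving S ⇑φ := hcr φ hauto
    set a : G := φ 1 with ha
    set ψ : G → G := fun g => a⁻¹ * φ g with hψ
    have hψcw : ∀ g : G, ∀ s ∈ S ∪ S⁻¹,
        ψ (g * s) = ψ g * s ∨ ψ (g * s) = ψ g * s⁻¹ := by
      intro g s hs
      rcases hcp g s hs with h | h
      · left; simp only [hψ, h, mul_assoc]
      · right; simp only [hψ, h, mul_assoc]
    have hψeq : ∀ g h : G, (ψ g)⁻¹ * ψ h = (φ g)⁻¹ * φ h := by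
      intro g h
      simp [hψ, mul_inv_rev, mul_assoc]
    have hψarc : ∀ g h : G, ((ψ g)⁻¹ * ψ h ∈ S' ↔ g⁻¹ * h ∈ S') := by
      intro g h
      rw [hψeq, harcs]
    have hstep : ∀ g : G, ∀ s ∈ S', ψ (g * s) = ψ g * s := by
      intro g s hs
      rcases hψcw g s (Or.inl (hsub hs)) with h | h
      · exact h
      · have harc' : (ψ g)⁻¹ * ψ (g * s) ∈ S' := by
          rw [hψarc]
          simpa using hs
        rw [h] at harc'
        simp only [inv_mul_cancel_left] at harc'
        have := hrigid s hs harc'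
        rw [h, ← this]
    have hstep' : ∀ g : G, ∀ s ∈ S', ψ (g * s⁻¹) = ψ g * s⁻¹ := by
      intro g s hs
      have h := hstep (g * s⁻¹) s hs
      simp only [inv_mul_cancel_right] at h
      rw [eq_comm, ← eq_mul_inv_iff_mul_eq] at h
      rw [← h]
    have hψ1 : ψ 1 = 1 := by simp [hψ, ha]
    have hfixlist : ∀ l : List G, (∀ y ∈ l, y ∈ S' ∪ S'⁻¹) → ψ l.prod = l.prod := by
      intro l
      induction l using List.reverseRecOn with
      | nil => intro _; simpa using hψ1
      | append_singleton l x ih =>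
        intro hl
        have hlx : ∀ y ∈ l, y ∈ S' ∪ S'⁻¹ := fun y hy => hl y (by simp [hy])
        have hx : x ∈ S' ∪ S'⁻¹ := hl x (by simp)
        rw [List.prod_append, List.prod_singleton]
        rcases hx with hx | hx
        · rw [hstep l.prod x hx, ih hlx]
        · have hx' : x⁻¹ ∈ S' := Set.mem_inv.mp hx
          have := hstep' l.prod x⁻¹ hx'
          rw [inv_inv] at this
          rw [this, ih hlx]
    have hfix : ∀ g : G, ψ g = g := by
      intro g
      have hg : g ∈ Subgroup.closure S' := by rw [hgen']; exact Subgroup.mem_top g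
      have hg' : g ∈ Submonoid.closure (S' ∪ S'⁻¹) := by
        rw [← Subgroup.closure_toSubmonoid]
        exact (Subgroup.mem_toSubmonoid _ _).mpr hg
      obtain ⟨l, hl, hprod⟩ := Submonoid.exists_list_of_mem_closure hg'
      rw [← hprod]
      exact hfixlist l hl
    exact ⟨a, fun x => by
      have := hfix x
      simp only [hψ] at this
      exact inv_mul_eq_iff_eq_mul.mp this⟩
end

section
/- Let G be a group, T a symmetric generating set of G with 1 ∉ T, and φ ∈ B(G,T). Set A = {g ∈ T ∪ {1} : φ(g) = g} and B = {g ∈ T : φ(g) = g⁻¹ ≠ g}. Let g ∈ A and h ∈ B be such that hg ∈ T and g⁻¹h ∈ T. Then hgh⁻¹ = g⁻¹. Moreover, if hg ∈ A, then the subgroup ⟨h,g⟩ is isomorphic to the quaternion group Q₈. -/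
open scoped Pointwise

universe u v

/-- Core algebraic lemma: if `h*g = g⁻¹*h` and `h² = g²` with `g² ≠ 1` and `g⁴ = 1`,
then `⟨h,g⟩ ≅ Q₈`. -/
lemma quat_of_relations {G : Type*} [Group G] (g h : G)
    (hconj : h * g = g⁻¹ * h) (hh : h * h = g * g)
    (hg2 : g * g ≠ 1) (hg4 : g ^ 4 = 1) :
    Nonempty (↥(Subgroup.closure ({h, g} : Set G)) ≃* QuaternionGroup 2) := by
  haveI : Fact (Nat.Prime 2) := ⟨Nat.prime_two⟩
  have hord : orderOf g = 4 := by
    have := orderOf_eq_prime_pow (p := 2) (n := 1) (x := g)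
      (by simpa [pow_succ, pow_two] using hg2) (by norm_num; exact hg4)
    simpa using this
  -- χ i = g ^ i.val
  set χ : ZMod 4 → G := fun i => g ^ i.val with hχ
  have χmul : ∀ i j : ZMod 4, χ i * χ j = χ (i + j) := by
    intro i j
    simp only [hχ]
    rw [← pow_add]
    apply pow_eq_pow_iff_modEq.mpr
    rw [hord]
    have h1 := ZMod.val_add i j
    have h2 := ZMod.val_lt (i + j)
    show (i.val + j.val) % 4 = (i + j).val % 4
    omega
  have χ0 : χ 0 = 1 := by simp [hχ]
  have χ1 : χ 1 = g := by simp [hχ]; rw [show (1 : ZMod 4).val = 1 from rfl, pow_one]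
  have χ2 : χ 2 = g * g := by
    simp [hχ]; rw [show (2 : ZMod 4).val = 2 from rfl, pow_two]
  have χinv : ∀ i : ZMod 4, (χ i)⁻¹ = χ (-i) := by
    intro i
    refine inv_eq_of_mul_eq_one_right ?_
    rw [χmul, add_neg_cancel, χ0]
  have hconj' : ∀ i : ZMod 4, h * χ i = (χ i)⁻¹ * h := by
    intro i
    have h1 : h * g * h⁻¹ = g⁻¹ := by
      rw [hconj]; group
    have h2 : h * g ^ i.val * h⁻¹ = (g ^ i.val)⁻¹ := by
      rw [← conj_pow, h1, inv_pow]
    have := h2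
    simp only [hχ]
    calc h * g ^ i.val = h * g ^ i.val * h⁻¹ * h := by group
      _ = (g ^ i.val)⁻¹ * h := by rw [h2]
  have hconj'' : ∀ i : ZMod 4, h * (χ i)⁻¹ = χ i * h := by
    intro i
    rw [χinv, hconj' (-i), χinv, neg_neg]
  have hhχ : h * h = χ 2 := by rw [χ2, hh]
  -- the homomorphism
  have hmul : ∀ x y : QuaternionGroup 2,
      (match x * y with | .a i => χ i | .xa i => (χ i)⁻¹ * h) =
      (match x with | .a i => χ i | .xa i => (χ i)⁻¹ * h) *
      (match y with | .a i => χ i | .xa i => (χ i)⁻¹ * h) := by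
    rintro (i | i) (j | j)
    · show χ (i + j) = χ i * χ j
      rw [χmul]
    · show (χ (j - i))⁻¹ * h = χ i * ((χ j)⁻¹ * h)
      have : χ (j - i) = χ j * (χ i)⁻¹ := by
        rw [χinv, χmul, sub_eq_add_neg]
      rw [this, mul_inv_rev, inv_inv, mul_assoc]
    · show (χ (i + j))⁻¹ * h = (χ i)⁻¹ * h * χ j
      rw [mul_assoc, hconj' j, ← mul_assoc]
      have : (χ (i + j))⁻¹ = (χ i)⁻¹ * (χ j)⁻¹ := by
        rw [χinv i, χinv j, χmul, χinv]
        congr 1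
        ring
      rw [this]
    · show χ (((2 : ℕ) : ZMod 4) + j - i) = (χ i)⁻¹ * h * ((χ j)⁻¹ * h)
      rw [mul_assoc, ← mul_assoc h, hconj'' j, mul_assoc, hhχ, χmul j 2, χinv i, χmul]
      congr 1
      push_cast
      ring
  let F : QuaternionGroup 2 →* G :=
    { toFun := fun x => match x with | .a i => χ i | .xa i => (χ i)⁻¹ * h
      map_one' := by rw [QuaternionGroup.one_def]; exact χ0
      map_mul' := hmul }
  have χinj : ∀ i j : ZMod 4, χ i = χ j → i = j := by
    intro i j hij
    have hm : i.val ≡ j.val [MOD 4] := by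
      have := (pow_eq_pow_iff_modEq).mp hij
      rwa [hord] at this
    have hi := ZMod.val_lt i
    have hj := ZMod.val_lt j
    have : i.val % 4 = j.val % 4 := hm
    have : i.val = j.val := by omega
    exact ZMod.val_injective 4 this
  have hnotχ : ∀ i : ZMod 4, h ≠ χ i := by
    intro i he
    have hcomm : g * h = h * g := by
      rw [he]; simp only [hχ]
      exact ((Commute.refl g).pow_right i.val).eq
    have : g⁻¹ * h = g * h := by rw [← hconj, hcomm]
    have hgg : g⁻¹ = g := mul_right_cancel this
    apply hg2
    nth_rewrite 2 [← hgg]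
    exact mul_inv_cancel g
  have hinj : Function.Injective F := by
    rintro (i | i) (j | j) hij
    · exact congrArg _ (χinj i j hij)
    · exfalso
      apply hnotχ (j + i)
      have h3 : χ i = (χ j)⁻¹ * h := hij
      rw [← χmul, h3]
      group
    · exfalso
      apply hnotχ (i + j)
      have h3 : (χ i)⁻¹ * h = χ j := hij
      rw [← χmul, ← h3]
      group
    · have : (χ i)⁻¹ * h = (χ j)⁻¹ * h := hij
      have := mul_right_cancel this
      have := inv_injective this
      exact congrArg _ (χinj i j this)
  have hrange : F.range = Subgroup.closure ({h, g} : Set G) := by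
    apply le_antisymm
    · rintro x ⟨y, rfl⟩
      have hg' : g ∈ Subgroup.closure ({h, g} : Set G) :=
        Subgroup.subset_closure (by simp)
      have hh' : h ∈ Subgroup.closure ({h, g} : Set G) :=
        Subgroup.subset_closure (by simp)
      rcases y with i | i
      · exact pow_mem hg' i.val
      · exact mul_mem (inv_mem (pow_mem hg' i.val)) hh'
    · rw [Subgroup.closure_le]
      rintro x hx
      rcases hx with h1 | h1
      · refine ⟨QuaternionGroup.xa 0, ?_⟩
        show (χ 0)⁻¹ * h = x
        rw [χ0, h1]
        group
      · exact ⟨QuaternionGroup.a 1, by rw [h1]; exact χ1⟩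
  exact ⟨((MonoidHom.ofInjective hinj).trans (MulEquiv.subgroupCongr hrange)).symm⟩

/-- **Lemma (anticommutation).** Let `T` be a symmetric generating set of `G` with
`1 ∉ T` and `φ ∈ 𝓑(G,T)`. If `g` is fixed by `φ` (i.e. `g ∈ A`), `h ∈ T` satisfies
`φ h = h⁻¹ ≠ h` (i.e. `h ∈ B`), and `h*g, g⁻¹*h ∈ T`, then `h*g*h⁻¹ = g⁻¹`; moreover
if `h*g ∈ A` then `⟨h,g⟩ ≅ Q₈`. -/
theorem anticommutant_lemma {G : Type u} [Group G] (T : Set G) (hsym : T⁻¹ = T)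
    (h1T : (1 : G) ∉ T) (hgen : Subgroup.closure T = ⊤)
    (φ : G → G) (hφ : MemBallPermGroup T φ)
    (g h : G) (hgT : g ∈ insert (1 : G) T) (hgA : φ g = g)
    (hhT : h ∈ T) (hhB : φ h = h⁻¹) (hhB' : h⁻¹ ≠ h)
    (hhg : h * g ∈ T) (hgh : g⁻¹ * h ∈ T) :
    h * g * h⁻¹ = g⁻¹ ∧
      (φ (h * g) = h * g →
        Nonempty (↥(Subgroup.closure ({h, g} : Set G)) ≃* QuaternionGroup 2)) := by
  -- first application: s = g, t = g⁻¹ * h, product = h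
  have key1 := hφ.2.2 g hgT (g⁻¹ * h) hgh (by rw [mul_inv_cancel_left]; exact hhT)
  rw [mul_inv_cancel_left, hgA, hhB, mul_inv_rev, inv_inv, mul_inv_cancel_left] at key1
  -- key1 : h⁻¹ = h ∨ h⁻¹ = g * (h⁻¹ * g)  (roughly)
  have hk : h⁻¹ = g * (h⁻¹ * g) := by
    rcases key1 with hk | hk
    · exact absurd hk hhB'
    · exact hk
  have h6 : g⁻¹ * h⁻¹ = h⁻¹ * g := by
    calc g⁻¹ * h⁻¹ = g⁻¹ * (g * (h⁻¹ * g)) := by rw [← hk]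
      _ = h⁻¹ * g := by group
  have hc : h * g = g⁻¹ * h := by
    have h7 := congrArg Inv.inv h6
    simpa [mul_inv_rev] using h7
  have hanti : h * g * h⁻¹ = g⁻¹ := by rw [hc]; group
  refine ⟨hanti, ?_⟩
  intro hfix
  rcases Set.mem_insert_iff.mp hgT with hg1 | hgTT
  · exfalso
    subst hg1
    rw [mul_one] at hfix
    rw [hhB] at hfix
    exact hhB' hfix
  have key2 := hφ.2.2 h (Set.mem_insert_of_mem _ hhT) g hgTT hhg
  rw [hfix, hhB] at key2
  have hk2 : h * g = h⁻¹ * g⁻¹ := by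
    rcases key2 with hk2 | hk2
    · exact absurd (mul_right_cancel hk2) (hhB'.symm)
    · exact hk2
  have hh3 : h * h = g⁻¹ * g⁻¹ := by
    apply mul_right_cancel (b := g)
    rw [mul_assoc, hk2]
    group
  have hgg : g * g = h * h := by
    apply mul_left_cancel (a := h)
    rw [← mul_assoc, hc, mul_assoc, hc, ← mul_assoc, ← hh3]
    group
  have hg4 : g ^ 4 = 1 := by
    have e2 : g * g * (g * g) = 1 := by
      nth_rewrite 1 [hgg]
      rw [hh3]
      group
    calc g ^ 4 = g * g * (g * g) := by rw [pow_succ, pow_succ, pow_succ, pow_one, mul_assoc]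
      _ = 1 := e2
  have hg2ne : g * g ≠ 1 := by
    intro hgg1
    apply hhB'
    have hh1 : h * h = 1 := by rw [← hgg, hgg1]
    exact (eq_inv_of_mul_eq_one_left hh1).symm
  exact quat_of_relations g h hc hgg.symm hg2ne hg4
end

section
/- Let G be a group, T a symmetric generating set of G with 1 ∉ T, and φ ∈ B(G,T). Set A = {g ∈ T ∪ {1} : φ(g) = g} and B = {g ∈ T : φ(g) = g⁻¹ ≠ g}. Let g, h ∈ A and f ∈ B be such that the seven elements gh, fg, g⁻¹f, fh, h⁻¹f, fgh, (gh)⁻¹f all lie in T. Then ghg⁻¹ ∈ {h, h⁻¹}; more precisely, if gh ∈ B then ⟨g,h⟩ is isomorphic to the quaternion group Q₈, while if gh ∈ A then g and h commute. -/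
open scoped Pointwise

universe u v

/-- Auxiliary: a group generated by `g, h` with the quaternion relations and
`g² ≠ 1` is isomorphic to `Q₈`. -/
lemma quat_aux {G : Type u} [Group G] (g h : G)
    (h4 : g ^ 4 = 1) (hsq : h * h = g * g) (hconj : h⁻¹ * g * h = g⁻¹)
    (hg2 : g * g ≠ 1) :
    Nonempty (↥(Subgroup.closure ({g, h} : Set G)) ≃* QuaternionGroup 2) := by
  have hzadd : ∀ i j : ZMod (2 * 2), g ^ (i + j).val = g ^ i.val * g ^ j.val := by
    intro i j
    rw [ZMod.val_add, ← pow_add]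
    exact (pow_eq_pow_mod _ h4).symm
  have hzneg : ∀ j : ZMod (2 * 2), g ^ (-j).val = (g ^ j.val)⁻¹ := by
    intro j
    apply eq_inv_of_mul_eq_one_left
    rw [← hzadd, neg_add_cancel]
    simp
  have hzsub : ∀ i j : ZMod (2 * 2), g ^ (i - j).val = g ^ i.val * (g ^ j.val)⁻¹ := by
    intro i j
    rw [sub_eq_add_neg, hzadd, hzneg]
  have hmove : ∀ m : ℕ, g ^ m * h = h * (g ^ m)⁻¹ := by
    intro m
    have hc : (g⁻¹) ^ m = h⁻¹ * g ^ m * h := by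
      have := conj_pow (i := m) (a := h⁻¹) (b := g)
      rw [inv_inv, hconj] at this
      exact this
    have : h * (g ^ m)⁻¹ = g ^ m * h := by
      rw [← inv_pow, hc]; group
    exact this.symm
  have hcommp : ∀ a b : ℕ, (g ^ a)⁻¹ * g ^ b = g ^ b * (g ^ a)⁻¹ := by
    intro a b
    exact (((Commute.refl g).pow_pow a b).inv_left).eq
  -- the homomorphism from Q₈
  set F : QuaternionGroup 2 → G :=
    fun q => match q with
    | QuaternionGroup.a i => g ^ i.val
    | QuaternionGroup.xa i => h * g ^ i.val with hF
  have hFa : ∀ i : ZMod (2 * 2), F (QuaternionGroup.a i) = g ^ i.val := fun _ => rfl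
  have hFxa : ∀ i : ZMod (2 * 2), F (QuaternionGroup.xa i) = h * g ^ i.val := fun _ => rfl
  have hmul : ∀ x y : QuaternionGroup 2, F (x * y) = F x * F y := by
    rintro (i | i) (j | j)
    · rw [QuaternionGroup.a_mul_a, hFa, hFa, hFa, hzadd]
    · rw [QuaternionGroup.a_mul_xa, hFxa, hFa, hFxa, hzsub]
      calc h * (g ^ j.val * (g ^ i.val)⁻¹)
          = h * (g ^ i.val)⁻¹ * g ^ j.val := by rw [← hcommp]; group
        _ = g ^ i.val * h * g ^ j.val := by rw [← hmove]
        _ = g ^ i.val * (h * g ^ j.val) := by group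
    · rw [QuaternionGroup.xa_mul_a, hFxa, hFxa, hFa, hzadd]
      group
    · rw [QuaternionGroup.xa_mul_xa, hFa, hFxa, hFxa]
      have h2v : ((2 : ℕ) : ZMod (2 * 2)).val = 2 := by decide
      calc g ^ (((2 : ℕ) : ZMod (2 * 2)) + j - i).val
          = g ^ (((2 : ℕ) : ZMod (2 * 2)) + j).val * (g ^ i.val)⁻¹ := by rw [hzsub]
        _ = g ^ ((2 : ℕ) : ZMod (2 * 2)).val * g ^ j.val * (g ^ i.val)⁻¹ := by rw [hzadd]
        _ = (g * g) * (g ^ j.val * (g ^ i.val)⁻¹) := by rw [h2v]; group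
        _ = (h * h) * ((g ^ i.val)⁻¹ * g ^ j.val) := by rw [hsq, hcommp]
        _ = h * (h * (g ^ i.val)⁻¹) * g ^ j.val := by group
        _ = h * (g ^ i.val * h) * g ^ j.val := by rw [← hmove]
        _ = h * g ^ i.val * (h * g ^ j.val) := by group
  set ψ : QuaternionGroup 2 →* G := MonoidHom.mk' F hmul with hψ
  have hg1 : g ≠ 1 := fun e => hg2 (by rw [e, mul_one])
  have hg3 : g ^ 3 ≠ 1 := by
    intro e
    apply hg1
    calc g = g ^ 4 * (g ^ 3)⁻¹ := by group
      _ = 1 := by rw [h4, e]; group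
  have hinj : Function.Injective ψ := by
    apply (injective_iff_map_eq_one ψ).mpr
    rintro (i | i) hx
    · have hx' : g ^ i.val = 1 := hx
      have hlt : i.val < 2 * 2 := ZMod.val_lt i
      have : i.val = 0 ∨ i.val = 1 ∨ i.val = 2 ∨ i.val = 3 := by omega
      rcases this with hv | hv | hv | hv
      · have : i = 0 := (ZMod.val_eq_zero i).mp hv
        rw [this]
        exact (QuaternionGroup.one_def).symm
      · rw [hv, pow_one] at hx'
        exact absurd hx' hg1
      · rw [hv] at hx'
        exact absurd ((pow_two g).symm.trans hx') hg2
      · rw [hv] at hx'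
        exact absurd hx' hg3
    · have hx' : h * g ^ i.val = 1 := hx
      have hh : h = (g ^ i.val)⁻¹ := eq_inv_of_mul_eq_one_left hx'
      exfalso
      apply hg2
      have : h⁻¹ * g * h = g := by
        rw [hh, inv_inv]
        calc g ^ i.val * g * (g ^ i.val)⁻¹ = g * g ^ i.val * (g ^ i.val)⁻¹ := by
              rw [← pow_succ, pow_succ']
          _ = g := by group
      rw [hconj] at this
      nth_rewrite 2 [← this]
      group
  have hmemc : ∀ x : QuaternionGroup 2, ψ x ∈ Subgroup.closure ({g, h} : Set G) := by
    have hgm : g ∈ Subgroup.closure ({g, h} : Set G) :=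
      Subgroup.subset_closure (Set.mem_insert _ _)
    have hhm : h ∈ Subgroup.closure ({g, h} : Set G) :=
      Subgroup.subset_closure (Set.mem_insert_of_mem _ rfl)
    rintro (i | i)
    · exact pow_mem hgm _
    · exact mul_mem hhm (pow_mem hgm _)
  have hrange : Subgroup.closure ({g, h} : Set G) ≤ ψ.range := by
    apply (Subgroup.closure_le _).mpr
    rintro x hx
    rcases hx with h1 | h1
    · refine ⟨QuaternionGroup.a 1, ?_⟩
      rw [h1]
      show g ^ (1 : ZMod (2 * 2)).val = g
      rw [(by decide : ((1 : ZMod (2 * 2))).val = 1), pow_one]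
    · rw [h1]
      refine ⟨QuaternionGroup.xa 0, ?_⟩
      show h * g ^ (0 : ZMod (2 * 2)).val = h
      simp
  set ψ' : QuaternionGroup 2 →* ↥(Subgroup.closure ({g, h} : Set G)) :=
    ψ.codRestrict _ hmemc with hψ'
  have hbij : Function.Bijective ψ' := by
    constructor
    · intro x y hxy
      apply hinj
      exact congrArg Subtype.val hxy
    · rintro ⟨y, hy⟩
      obtain ⟨q, hq⟩ := hrange hy
      exact ⟨q, Subtype.ext hq⟩
  exact ⟨(MulEquiv.ofBijective ψ' hbij).symm⟩

/-- **Lemma.** Let `T` be a symmetric generating set of `G` with `1 ∉ T` and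
`φ ∈ 𝓑(G,T)`, `g, h ∈ A` (fixed by `φ`), `f ∈ B` (inverted by `φ`), with the seven
elements `g*h, f*g, g⁻¹*f, f*h, h⁻¹*f, f*g*h, (g*h)⁻¹*f` all in `T`. Then
`g*h*g⁻¹ ∈ {h, h⁻¹}`; more precisely if `g*h ∈ B` then `⟨g,h⟩ ≅ Q₈`, while if
`g*h ∈ A` then `g` and `h` commute. -/
theorem abelian_lemma {G : Type u} [Group G] (T : Set G) (hsym : T⁻¹ = T)
    (h1T : (1 : G) ∉ T) (hgen : Subgroup.closure T = ⊤)
    (φ : G → G) (hφ : MemBallPermGroup T φ)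
    (g h f : G)
    (hgT : g ∈ insert (1 : G) T) (hgA : φ g = g)
    (hhT : h ∈ insert (1 : G) T) (hhA : φ h = h)
    (hfT : f ∈ T) (hfB : φ f = f⁻¹) (hfB' : f⁻¹ ≠ f)
    (m1 : g * h ∈ T) (m2 : f * g ∈ T) (m3 : g⁻¹ * f ∈ T) (m4 : f * h ∈ T)
    (m5 : h⁻¹ * f ∈ T) (m6 : f * g * h ∈ T) (m7 : (g * h)⁻¹ * f ∈ T) :
    (g * h * g⁻¹ = h ∨ g * h * g⁻¹ = h⁻¹) ∧
      ((φ (g * h) = (g * h)⁻¹ ∧ (g * h)⁻¹ ≠ g * h) →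
        Nonempty (↥(Subgroup.closure ({g, h} : Set G)) ≃* QuaternionGroup 2)) ∧
      (φ (g * h) = g * h → g * h = h * g) := by
  
  obtain ⟨hbij, hone, hloc⟩ := hφ
  have hinv : ∀ x, x ∈ T → x⁻¹ ∈ T := by
    intro x hx
    rw [← hsym]
    exact Set.inv_mem_inv.mpr hx
  -- `φ` of any element of `T` is the element or its inverse
  have hval : ∀ x, x ∈ T → φ x = x ∨ φ x = x⁻¹ := by
    intro x hx
    have := hloc 1 (Set.mem_insert _ _) x hx (by rwa [one_mul])
    rwa [one_mul, hone, one_mul, one_mul] at this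
  -- key triangle fact: if `φ` fixes `a` and `a⁻¹ * f ∈ T` then `a * f⁻¹ * a = f⁻¹`
  have key : ∀ a, a ∈ insert (1 : G) T → φ a = a → a⁻¹ * f ∈ T →
      a * f⁻¹ * a = f⁻¹ := by
    intro a ha hfix hm
    have hsT : a * (a⁻¹ * f) ∈ T := by rwa [mul_inv_cancel_left]
    have := hloc a ha (a⁻¹ * f) hm hsT
    rw [mul_inv_cancel_left, hfB, hfix, mul_inv_rev, inv_inv] at this
    rcases this with hc | hc
    · rw [mul_inv_cancel_left] at hc
      exact absurd hc hfB'
    · nth_rewrite 2 [hc]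
      group
  have flip : ∀ x y : G, x * y * x = y → y * x = x⁻¹ * y := by
    intro x y hxy
    apply mul_left_cancel (a := x)
    rw [← mul_assoc, hxy, mul_inv_cancel_left]
  have hghval : φ (g * h) = g * h ∨ φ (g * h) = (g * h)⁻¹ := by
    have := hloc 1 (Set.mem_insert _ _) (g * h) m1 (by rwa [one_mul])
    rwa [one_mul, hone, one_mul, one_mul] at this
  by_cases hA : φ (g * h) = g * h
  · -- `g * h` is fixed: `g` and `h` commute
    have p1 := key g hgT hgA m3
    have p2 := key h hhT hhA m5
    have p3 := key (g * h) (Set.mem_insert_of_mem _ m1) hA m7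
    have e1 := flip g f⁻¹ p1
    have e2 := flip h f⁻¹ p2
    have e3 := flip (g * h) f⁻¹ p3
    have e4 : (g * h)⁻¹ * f⁻¹ = g⁻¹ * h⁻¹ * f⁻¹ := by
      rw [← e3]
      calc f⁻¹ * (g * h) = f⁻¹ * g * h := by group
        _ = g⁻¹ * f⁻¹ * h := by rw [e1]
        _ = g⁻¹ * (f⁻¹ * h) := by group
        _ = g⁻¹ * (h⁻¹ * f⁻¹) := by rw [e2]
        _ = g⁻¹ * h⁻¹ * f⁻¹ := by group
    have e5 : (g * h)⁻¹ = g⁻¹ * h⁻¹ := mul_right_cancel e4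
    have comm : g * h = h * g := by
      have e6 := congrArg Inv.inv e5
      rwa [inv_inv, mul_inv_rev, inv_inv, inv_inv] at e6
    refine ⟨Or.inl (by rw [comm]; group), ?_, fun _ => comm⟩
    rintro ⟨c1, c2⟩
    exact absurd (c1.symm.trans hA) c2
  · -- `g * h` is inverted: quaternion case
    have hB : φ (g * h) = (g * h)⁻¹ := hghval.resolve_left hA
    have hne : (g * h)⁻¹ ≠ g * h := fun e => hA (hB.trans e)
    have hg1 : g ≠ 1 := by
      intro e
      apply hA
      rw [e, one_mul, hhA]
    have hh1 : h ≠ 1 := by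
      intro e
      apply hA
      rw [e, mul_one, hgA]
    have hgT' : g ∈ T := hgT.resolve_left hg1
    have hhT' : h ∈ T := hhT.resolve_left hh1
    -- (g*h)⁻¹ = g * h⁻¹
    have e3 : (g * h)⁻¹ = g * h⁻¹ := by
      have := hloc g hgT h hhT' m1
      rw [hgA] at this
      rcases this with hc | hc
      · exact absurd hc hA
      · rw [← hc, hB]
    have hh2 : h⁻¹ ≠ h := by
      intro e
      apply hne
      rw [e3, e]
    have hinjOn := hbij.injOn
    have m1' : (g * h)⁻¹ ∈ T := hinv _ m1
    have hinvh : h⁻¹ ∈ T := hinv _ hhT'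
    have hφinv : φ ((g * h)⁻¹) = g * h := by
      have := hloc 1 (Set.mem_insert _ _) ((g * h)⁻¹) m1' (by rwa [one_mul])
      rw [one_mul, hone, one_mul, one_mul, inv_inv] at this
      rcases this with hc | hc
      · exfalso
        apply hne
        exact hinjOn (Set.mem_insert_of_mem _ m1') (Set.mem_insert_of_mem _ m1)
          (hc.trans hB.symm)
      · exact hc
    have hφinvh : φ h⁻¹ = h⁻¹ := by
      have := hloc 1 (Set.mem_insert _ _) h⁻¹ hinvh (by rwa [one_mul])
      rw [one_mul, hone, one_mul, one_mul, inv_inv] at this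
      rcases this with hc | hc
      · exact hc
      · exfalso
        apply hh2
        exact hinjOn (Set.mem_insert_of_mem _ hinvh) (Set.mem_insert_of_mem _ hhT')
          (hc.trans hhA.symm)
    have hred : (g * h)⁻¹ * g = h⁻¹ := by group
    have b5 : h⁻¹ = g * h * g ∨ h⁻¹ = g * h * g⁻¹ := by
      have := hloc ((g * h)⁻¹) (Set.mem_insert_of_mem _ m1') g hgT'
        (by rw [hred]; exact hinvh)
      rw [hred, hφinvh, hφinv] at this
      exact this
    have e3' : h⁻¹ = g * h⁻¹ * g := by
      have h9 : h⁻¹ * g⁻¹ = g * h⁻¹ := by rw [← mul_inv_rev, e3]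
      calc h⁻¹ = h⁻¹ * g⁻¹ * g := by group
        _ = g * h⁻¹ * g := by rw [h9]
    have rel1 : h⁻¹ = g * h * g⁻¹ := by
      rcases b5 with hc | hc
      · exfalso
        apply hh2
        have : g * h * g = g * h⁻¹ * g := hc.symm.trans e3'
        have := mul_right_cancel this
        have := mul_left_cancel this
        exact this.symm
      · exact hc
    have hsq : h * h = g * g := by
      have e7 : g * h * g⁻¹ = g * h⁻¹ * g := rel1.symm.trans e3'
      rw [mul_assoc, mul_assoc] at e7
      have e8 : h * g⁻¹ = h⁻¹ * g := mul_left_cancel e7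
      calc h * h = h * (h * g⁻¹) * g := by group
        _ = h * (h⁻¹ * g) * g := by rw [e8]
        _ = g * g := by group
    have relc : h⁻¹ * g * h = g⁻¹ := by
      have hgh : g * h = h⁻¹ * g := by
        calc g * h = g * h * g⁻¹ * g := by group
          _ = h⁻¹ * g := by rw [← rel1]
      calc h⁻¹ * g * h = h⁻¹ * (g * h) := by group
        _ = h⁻¹ * (h⁻¹ * g) := by rw [hgh]
        _ = (h * h)⁻¹ * g := by group
        _ = (g * g)⁻¹ * g := by rw [hsq]
        _ = g⁻¹ := by group
    have hh' : h * h = g⁻¹ * g⁻¹ := by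
      calc h * h = h⁻¹ * (h * h) * h := by group
        _ = h⁻¹ * (g * g) * h := by rw [hsq]
        _ = (h⁻¹ * g * h) * (h⁻¹ * g * h) := by group
        _ = g⁻¹ * g⁻¹ := by rw [relc]
    have hgg : g * g = g⁻¹ * g⁻¹ := hsq.symm.trans hh'
    have h4 : g ^ 4 = 1 := by
      have e2 : (g * g) * (g * g) = 1 := by
        nth_rewrite 2 [hgg]
        group
      calc g ^ 4 = (g * g) * (g * g) := by
            rw [pow_succ, pow_succ, pow_succ, pow_one, mul_assoc]
        _ = 1 := e2
    have hg2 : g * g ≠ 1 := by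
      intro e
      apply hh2
      have : h * h = 1 := by rw [hsq, e]
      exact inv_eq_of_mul_eq_one_right this
    exact ⟨Or.inr rel1.symm, fun _ => quat_aux g h h4 hsq relc hg2,
      fun e => absurd e hA⟩
end

section
/- Let G be a group and S a finite generating set with 1 ∉ S satisfying condition (*). Let p denote the number of elements of S of order 2 and q the number of elements of S of order at least 3. Then there exists a generating set T of G with S ⊆ T, 1 ∉ T, |T^±| ≤ p + 6q, such that the triple (G,S,T) is strongly orientation-rigid. Furthermore, every generating set of a group G having no non-trivial abelian characteristic subgroups satisfies condition (*). -/
open scoped Pointwise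

universe u v

lemma conj_helper {G : Type*} [Group G] {a b c d : G} (w : G) (e : a = b)
    (h : c * d⁻¹ = w * (a * b⁻¹) * w⁻¹) : c = d := by
  have h1 : c * d⁻¹ = 1 := by rw [h, mul_inv_eq_one.mpr e, mul_one, mul_inv_cancel]
  exact mul_inv_eq_one.mp h1

/-- **Proposition (condition (*)).** If a finite generating set `S` of `G` satisfies
condition (*), then `S` extends to a generating set `T` with `|T^±| ≤ p + 6q` such
that `(G,S,T)` is strongly orientation-rigid, where `p` (resp. `q`) is the number of
elements of `S` of order 2 (resp. of order at least 3). Furthermore, every generating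
set of a group with no non-trivial abelian characteristic subgroups satisfies (*). -/
theorem property_star_rigidity {G : Type u} [Group G] (S : Finset G)
    (h1S : (1 : G) ∉ S) (hgen : Subgroup.closure (S : Set G) = ⊤)
    (hstar : ∀ s ∈ S, s ^ 2 = 1 ∨
      ∃ g : G, s ^ 2 ≠ g ^ 2 ∧ s * g * s⁻¹ ≠ g ∧ s * g * s⁻¹ ≠ g⁻¹)
    (p q : ℕ)
    (hp : p = (S.filter fun s => orderOf s = 2).card)
    (hq : q = (S.filter fun s => 3 ≤ orderOf s ∨ orderOf s = 0).card) :
    (∃ T : Finset G, S ⊆ T ∧ (1 : G) ∉ T ∧ Subgroup.closure (T : Set G) = ⊤ ∧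
        Set.ncard ((T : Set G) ∪ (T : Set G)⁻¹) ≤ p + 6 * q ∧
        StronglyOrientationRigid (S : Set G) (T : Set G)) ∧
      (∀ (H : Type v) [Group H],
        (∀ K : Subgroup H, K.Characteristic → (∀ a ∈ K, ∀ b ∈ K, a * b = b * a) → K = ⊥) →
        ∀ S' : Set H, Subgroup.closure S' = ⊤ →
          ∀ s ∈ S', s ^ 2 = 1 ∨
            ∃ g : H, s ^ 2 ≠ g ^ 2 ∧ s * g * s⁻¹ ≠ g ∧ s * g * s⁻¹ ≠ g⁻¹) := by
  constructor
  ·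
    classical
    have hne1 : ∀ s ∈ S, s ≠ 1 := fun s hs h => h1S (h ▸ hs)
    set S₃ : Finset G := S.filter (fun s => ¬ s ^ 2 = 1) with hS₃def
    have hporder : ∀ s ∈ S, (orderOf s = 2 ↔ s ^ 2 = 1) := by
      intro s hs
      constructor
      · intro h; rw [← h]; exact pow_orderOf_eq_one s
      · intro h
        rcases (Nat.dvd_prime Nat.prime_two).mp (orderOf_dvd_of_pow_eq_one h) with h1 | h1
        · exact absurd (orderOf_eq_one_iff.mp h1) (hne1 s hs)
        · exact h1
    have hpcard : p = (S.filter fun s => s ^ 2 = 1).card := by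
      rw [hp]
      congr 1
      exact Finset.filter_congr (fun x hx => by simpa using hporder x hx)
    have hqcard : q = S₃.card := by
      rw [hq, hS₃def]
      congr 1
      refine Finset.filter_congr (fun x hx => ?_)
      have hne : orderOf x ≠ 1 := fun h => hne1 x hx (orderOf_eq_one_iff.mp h)
      constructor
      · rintro h hc
        rcases (Nat.dvd_prime Nat.prime_two).mp (orderOf_dvd_of_pow_eq_one hc) with h1 | h1 <;> omega
      · intro h
        have h2 : orderOf x ≠ 2 := fun hh => h (by rw [← hh]; exact pow_orderOf_eq_one x)
        omega
    have hex : ∀ s : G, s ∈ S₃ → ∃ g : G, s ^ 2 ≠ g ^ 2 ∧ s * g * s⁻¹ ≠ g ∧ s * g * s⁻¹ ≠ g⁻¹ := by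
      intro s hs
      rcases Finset.mem_filter.mp hs with ⟨hsS, hs2⟩
      exact (hstar s hsS).resolve_left hs2
    choose! gf hgf using hex
    set T : Finset G := S ∪ S₃.image gf ∪ S₃.image (fun s => (gf s)⁻¹ * s) with hTdef
    have hST : S ⊆ T := fun x hx => Finset.mem_union_left _ (Finset.mem_union_left _ hx)
    have h1T : (1 : G) ∉ T := by
      intro h1T
      rcases Finset.mem_union.mp h1T with h | h
      · rcases Finset.mem_union.mp h with h | h
        · exact h1S h
        · rcases Finset.mem_image.mp h with ⟨s, hs, hgs⟩
          exact (hgf s hs).2.1 (by rw [hgs]; simp)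
      · rcases Finset.mem_image.mp h with ⟨s, hs, hgs⟩
        have hh : gf s = s := inv_mul_eq_one.mp hgs
        exact (hgf s hs).2.1 (by rw [hh]; group)
    refine ⟨T, hST, h1T, ?_, ?_, ?_⟩
    · rw [eq_top_iff, ← hgen]
      exact Subgroup.closure_mono (Finset.coe_subset.mpr hST)
    · -- cardinality
      set F1 : Finset G := S.filter (fun s => s ^ 2 = 1) with hF1def
      set I1 : Finset G := S₃.image (fun s => s⁻¹) with hI1def
      set I2 : Finset G := S₃.image gf with hI2def
      set I3 : Finset G := S₃.image (fun s => (gf s)⁻¹) with hI3def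
      set I4 : Finset G := S₃.image (fun s => (gf s)⁻¹ * s) with hI4def
      set I5 : Finset G := S₃.image (fun s => ((gf s)⁻¹ * s)⁻¹) with hI5def
      set U : Finset G := F1 ∪ S₃ ∪ I1 ∪ I2 ∪ I3 ∪ I4 ∪ I5 with hUdef
      have hcomp : ∀ x : G, (x ∈ F1 ∨ x ∈ S₃ ∨ x ∈ I1 ∨ x ∈ I2 ∨ x ∈ I3 ∨ x ∈ I4 ∨ x ∈ I5) →
          x ∈ U := by
        intro x hx
        simp only [hUdef, Finset.mem_union]
        tauto
      have hsub : ((T : Set G) ∪ (T : Set G)⁻¹) ⊆ (U : Set G) := by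
        intro x hx
        rw [Finset.mem_coe]
        apply hcomp
        rcases hx with hx | hx
        · have hxT : x ∈ T := Finset.mem_coe.mp hx
          rcases Finset.mem_union.mp hxT with h | h
          · rcases Finset.mem_union.mp h with h | h
            · by_cases h2 : x ^ 2 = 1
              · exact Or.inl (Finset.mem_filter.mpr ⟨h, h2⟩)
              · exact Or.inr (Or.inl (Finset.mem_filter.mpr ⟨h, h2⟩))
            · exact Or.inr (Or.inr (Or.inr (Or.inl h)))
          · exact Or.inr (Or.inr (Or.inr (Or.inr (Or.inr (Or.inl h)))))
        · have hxT : x⁻¹ ∈ T := by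
            rw [Set.mem_inv] at hx
            exact Finset.mem_coe.mp hx
          rcases Finset.mem_union.mp hxT with h | h
          · rcases Finset.mem_union.mp h with h | h
            · by_cases h2 : x ^ 2 = 1
              · have hxx : x⁻¹ = x := inv_eq_of_mul_eq_one_right (by rw [← pow_two]; exact h2)
                exact Or.inl (Finset.mem_filter.mpr ⟨hxx ▸ h, h2⟩)
              · have h2' : ¬ (x⁻¹) ^ 2 = 1 := by
                  intro hc
                  apply h2
                  rw [inv_pow] at hc
                  exact inv_eq_one.mp hc
                refine Or.inr (Or.inr (Or.inl ?_))
                rw [hI1def]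
                exact Finset.mem_image.mpr ⟨x⁻¹, Finset.mem_filter.mpr ⟨h, h2'⟩, inv_inv x⟩
            · rcases Finset.mem_image.mp h with ⟨a, ha, hax⟩
              refine Or.inr (Or.inr (Or.inr (Or.inr (Or.inl ?_))))
              rw [hI3def]
              exact Finset.mem_image.mpr ⟨a, ha, by rw [hax, inv_inv]⟩
          · rcases Finset.mem_image.mp h with ⟨a, ha, hax⟩
            refine Or.inr (Or.inr (Or.inr (Or.inr (Or.inr (Or.inr ?_)))))
            rw [hI5def]
            exact Finset.mem_image.mpr ⟨a, ha, by rw [hax, inv_inv]⟩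
      have hUcard : U.card ≤ p + 6 * q := by
        have b1 := Finset.card_union_le (F1 ∪ S₃ ∪ I1 ∪ I2 ∪ I3 ∪ I4) I5
        have b2 := Finset.card_union_le (F1 ∪ S₃ ∪ I1 ∪ I2 ∪ I3) I4
        have b3 := Finset.card_union_le (F1 ∪ S₃ ∪ I1 ∪ I2) I3
        have b4 := Finset.card_union_le (F1 ∪ S₃ ∪ I1) I2
        have b5 := Finset.card_union_le (F1 ∪ S₃) I1
        have b6 := Finset.card_union_le F1 S₃
        have c1 : I1.card ≤ q := hqcard ▸ Finset.card_image_le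
        have c2 : I2.card ≤ q := hqcard ▸ Finset.card_image_le
        have c3 : I3.card ≤ q := hqcard ▸ Finset.card_image_le
        have c4 : I4.card ≤ q := hqcard ▸ Finset.card_image_le
        have c5 : I5.card ≤ q := hqcard ▸ Finset.card_image_le
        have c6 : S₃.card = q := hqcard.symm
        have c7 : F1.card = p := hpcard.symm
        rw [hUdef]
        omega
      calc Set.ncard ((T : Set G) ∪ (T : Set G)⁻¹)
          ≤ Set.ncard (U : Set G) := Set.ncard_le_ncard hsub U.finite_toSet
        _ = U.card := Set.ncard_coe_finset U
        _ ≤ p + 6 * q := hUcard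
    · -- rigidity
      intro φ hφ x hx
      obtain ⟨hbij, hone, hcol⟩ := hφ
      have hballmem : ∀ y : G, y ∈ (T : Set G) ∪ (T : Set G)⁻¹ → y ∈ ball1 (T : Set G) :=
        fun y hy => Set.mem_insert_iff.mpr (Or.inr hy)
      have h1b : (1 : G) ∈ ball1 (T : Set G) := Set.mem_insert _ _
      have hTm : ∀ y ∈ T, y ∈ (T : Set G) ∪ (T : Set G)⁻¹ :=
        fun y hy => Or.inl (Finset.mem_coe.mpr hy)
      have hTmi : ∀ y ∈ T, y⁻¹ ∈ (T : Set G) ∪ (T : Set G)⁻¹ := by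
        intro y hy
        refine Or.inr ?_
        rw [Set.mem_inv, inv_inv]
        exact Finset.mem_coe.mpr hy
      have stepA : ∀ t, t ∈ (T : Set G) ∪ (T : Set G)⁻¹ → (φ t = t ∨ φ t = t⁻¹) := by
        intro t ht
        have := hcol 1 h1b t ht (by rw [one_mul]; exact hballmem t ht)
        simpa [hone] using this
      have key : ∀ s ∈ S₃, φ s = s ∧ φ s⁻¹ = s⁻¹ := by
        intro s hs
        have hs2 : ¬ s ^ 2 = 1 := (Finset.mem_filter.mp hs).2
        have hsS : s ∈ S := (Finset.mem_filter.mp hs).1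
        have hsT : s ∈ T := hST hsS
        have hgT : gf s ∈ T :=
          Finset.mem_union_left _ (Finset.mem_union_right _ (Finset.mem_image_of_mem _ hs))
        have htT : (gf s)⁻¹ * s ∈ T := Finset.mem_union_right _ (Finset.mem_image_of_mem _ hs)
        obtain ⟨P1, P2, P3⟩ := hgf s hs
        constructor
        · rcases stepA s (hTm s hsT) with h | h
          · exact h
          · exfalso
            have hedge := hcol (gf s) (hballmem _ (hTm _ hgT)) ((gf s)⁻¹ * s) (hTm _ htT)
              (by rw [mul_inv_cancel_left]; exact hballmem _ (hTm s hsT))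
            rw [mul_inv_cancel_left, h] at hedge
            rcases stepA (gf s) (hTm _ hgT) with hg | hg <;> rw [hg] at hedge <;>
              rcases hedge with e | e
            · exact hs2 (conj_helper 1 e.symm (by rw [pow_two]; group))
            · exact P3 (conj_helper s e.symm (by group))
            · exact P1 (conj_helper ((gf s) ^ 2) e (by rw [pow_two, pow_two]; group)).symm
            · exact P2 (conj_helper (s * gf s) e (by group))
        · rcases stepA s⁻¹ (hTmi s hsT) with h | h
          · exact h
          · exfalso
            rw [inv_inv] at h
            have hsg : s⁻¹ * gf s ∈ (T : Set G) ∪ (T : Set G)⁻¹ := by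
              refine Or.inr ?_
              rw [Set.mem_inv, mul_inv_rev, inv_inv]
              exact Finset.mem_coe.mpr htT
            have hedge := hcol s⁻¹ (hballmem _ (hTmi s hsT)) (gf s) (hTm _ hgT)
              (hballmem _ hsg)
            rw [h] at hedge
            rcases stepA (s⁻¹ * gf s) hsg with hg | hg <;> rw [hg] at hedge <;>
              rcases hedge with e | e
            · exact hs2 (conj_helper 1 e.symm (by rw [pow_two]; group))
            · exact P1 (conj_helper s e.symm (by rw [pow_two, pow_two]; group))
            · exact P3 (conj_helper 1 e.symm (by group))
            · exact P2 (conj_helper (gf s) e (by group))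
      rcases Set.mem_insert_iff.mp hx with rfl | hx
      · exact hone
      rcases hx with hx | hx
      · have hxS : x ∈ S := Finset.mem_coe.mp hx
        by_cases h2 : x ^ 2 = 1
        · have hxx : x⁻¹ = x := inv_eq_of_mul_eq_one_right (by rw [← pow_two]; exact h2)
          rcases stepA x (hTm x (hST hxS)) with h | h
          · exact h
          · rw [hxx] at h; exact h
        · exact (key x (Finset.mem_filter.mpr ⟨hxS, h2⟩)).1
      · have hxS : x⁻¹ ∈ S := by
          rw [Set.mem_inv] at hx
          exact Finset.mem_coe.mp hx
        by_cases h2 : x ^ 2 = 1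
        · have hxx : x⁻¹ = x := inv_eq_of_mul_eq_one_right (by rw [← pow_two]; exact h2)
          rcases stepA x (hTm x (hST (hxx ▸ hxS))) with h | h
          · exact h
          · rw [hxx] at h; exact h
        · have h2' : ¬ (x⁻¹) ^ 2 = 1 := by
            intro hc
            apply h2
            rw [inv_pow] at hc
            exact inv_eq_one.mp hc
          have := (key x⁻¹ (Finset.mem_filter.mpr ⟨hxS, h2'⟩)).2
          simpa using this
  · intro H _ hchar S' hS' s hsS'
    by_cases h2 : s ^ 2 = 1
    · exact Or.inl h2
    refine Or.inr ?_
    by_contra hno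
    push_neg at hno
    have hcen : s ^ 2 ∈ Subgroup.center H := by
      rw [Subgroup.mem_center_iff]
      intro g
      by_cases hA : s ^ 2 = g ^ 2
      · rw [hA, pow_two]; group
      by_cases hB : s * g * s⁻¹ = g
      · have hc : s * g = g * s := by
          have := congrArg (· * s) hB
          simpa [mul_assoc] using this
        have hcomm : Commute s g := hc
        exact ((hcomm.pow_left 2).eq).symm
      · have e := hno g hA hB
        have k1 : s * g = g⁻¹ * s := by
          have := congrArg (· * s) e
          simpa [mul_assoc] using this
        have k2 : g * s = s * g⁻¹ := by
          have := congrArg (fun x => g * x * g⁻¹) k1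
          simpa [mul_assoc] using this
        calc g * s ^ 2 = (g * s) * s := by rw [pow_two, mul_assoc]
          _ = s * (g⁻¹ * s) := by rw [k2, mul_assoc]
          _ = s * (s * g) := by rw [← k1]
          _ = s ^ 2 * g := by rw [pow_two, mul_assoc]
    have hbot : Subgroup.center H = ⊥ :=
      hchar _ inferInstance (fun a ha b hb => (Subgroup.mem_center_iff.mp ha b).symm)
    rw [hbot, Subgroup.mem_bot] at hcen
    exact h2 hcen
end
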